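/- arXiv:1401.6659 — 6 statements merged into one kernel-verified Lean document; each statement's English description precedes it below -/
import Mathlib

section
/- Let S be a set of positive integers with positive Banach density δ(S) > 0, and let N = ⌊1/δ(S)⌋ + 1. Then there exist a positive integer k and a subset Q ⊆ S such that: (1) k ≤ N − 1; (2) the Banach density of Q satisfies δ(Q) ≥ (N·δ(S) − 1)/(2N²(N − 1)) > 0; and (3) for all a ∈ Q, we have a + k ∈ S. -/
/-- The Banach (upper) density of a set of natural numbers: the `limsup`, as the interval
length `n` tends to infinity, of the largest proportion `|S ∩ I| / |I|` over
intervals `I` of natural numbers of length `n`. -/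
noncomputable def banachDensity (S : Set ℕ) : ℝ :=
  Filter.limsup (fun n : ℕ => ⨆ a : ℕ, ((S ∩ Set.Ico a (a + n)).ncard : ℝ) / n) Filter.atTop

open Filter Set

attribute [local instance] Classical.propDecidable

lemma bd_term_nonneg (S : Set ℕ) (n a : ℕ) :
    0 ≤ ((S ∩ Set.Ico a (a + n)).ncard : ℝ) / n := by positivity

lemma bd_term_le_one (S : Set ℕ) (n a : ℕ) :
    ((S ∩ Set.Ico a (a + n)).ncard : ℝ) / n ≤ 1 := by
  rcases Nat.eq_zero_or_pos n with h | h
  · simp [h]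
  · rw [div_le_one (by exact_mod_cast h)]
    have : (S ∩ Set.Ico a (a + n)).ncard ≤ (Set.Ico a (a + n)).ncard :=
      Set.ncard_le_ncard inter_subset_right (Set.finite_Ico _ _)
    have h2 : (Set.Ico a (a + n)).ncard = n := by
      rw [← Finset.coe_Ico, Set.ncard_coe_finset, Nat.card_Ico]
      omega
    exact_mod_cast h2 ▸ this

lemma bd_bdd (S : Set ℕ) (n : ℕ) :
    BddAbove (Set.range fun a : ℕ => ((S ∩ Set.Ico a (a + n)).ncard : ℝ) / n) :=
  ⟨1, by rintro x ⟨a, rfl⟩; exact bd_term_le_one S n a⟩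

lemma bd_f_le_one (S : Set ℕ) (n : ℕ) :
    (⨆ a : ℕ, ((S ∩ Set.Ico a (a + n)).ncard : ℝ) / n) ≤ 1 :=
  ciSup_le fun a => bd_term_le_one S n a

lemma bd_f_nonneg (S : Set ℕ) (n : ℕ) :
    0 ≤ ⨆ a : ℕ, ((S ∩ Set.Ico a (a + n)).ncard : ℝ) / n :=
  le_trans (bd_term_nonneg S n 0) (le_ciSup (bd_bdd S n) 0)

lemma bd_le_one (S : Set ℕ) : banachDensity S ≤ 1 :=
  Filter.limsup_le_of_le
    (Filter.isCoboundedUnder_le_of_le _ fun n => bd_f_nonneg S n)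
    (Filter.Eventually.of_forall fun n => bd_f_le_one S n)

lemma ncard_inter_Ico (S : Set ℕ) (a b : ℕ) :
    (S ∩ Set.Ico a b).ncard
      = ((Finset.Ico a b).filter (fun x => x ∈ S)).card := by
  classical
  rw [← Set.ncard_coe_finset]
  congr 1
  ext x
  simp [and_comm]

lemma key (S : Set ℕ) (N : ℕ) (hN2 : 2 ≤ N) (n a : ℕ) :
    ∃ k ∈ Finset.Icc 1 (N - 1),
      (S ∩ Set.Ico a (a + n)).ncard ≤
        (N - 1) * ({x | x ∈ S ∧ x + k ∈ S} ∩ Set.Ico a (a + n)).ncard * N + n / N + N := by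
  classical
  have hNpos : 0 < N := by omega
  set m := n / N with hm
  have hmN : m * N ≤ n := Nat.div_mul_le_self n N
  set blk : ℕ → Finset ℕ :=
    fun j => (Finset.Ico (a + j * N) (a + j * N + N)).filter (fun x => x ∈ S) with hblk
  set cnt : ℕ → ℕ := fun j => (blk j).card with hcnt
  set J := (Finset.range m).filter (fun j => 2 ≤ cnt j) with hJ
  set q : ℕ → ℕ :=
    fun k => ((Finset.Ico a (a + n)).filter (fun x => x ∈ S ∧ x + k ∈ S)).card with hq
  -- block members lie in the big interval
  have hblk_sub : ∀ j < m, blk j ⊆ Finset.Ico a (a + n) := by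
    intro j hj x hx
    rw [hblk] at hx
    simp only [Finset.mem_filter, Finset.mem_Ico] at hx ⊢
    have h1 : (j + 1) * N ≤ m * N := Nat.mul_le_mul_right N (by omega)
    have := hx.1
    constructor
    · omega
    · have : x < a + (j + 1) * N := by rw [Nat.succ_mul]; omega
      omega
  -- Step A
  have stepA : (S ∩ Set.Ico a (a + n)).ncard ≤ (∑ j ∈ Finset.range m, cnt j) + N := by
    rw [ncard_inter_Ico]
    have hsub : (Finset.Ico a (a + n)).filter (fun x => x ∈ S) ⊆
        ((Finset.range m).biUnion blk) ∪ Finset.Ico (a + m * N) (a + n) := by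
      intro x hx
      simp only [Finset.mem_filter, Finset.mem_Ico] at hx
      rcases lt_or_ge x (a + m * N) with hlt | hge
      · apply Finset.mem_union_left
        refine Finset.mem_biUnion.2 ⟨(x - a) / N, ?_, ?_⟩
        · rw [Finset.mem_range]
          rw [Nat.div_lt_iff_lt_mul hNpos]
          omega
        · simp only [hblk, Finset.mem_filter, Finset.mem_Ico]
          have h1 := Nat.div_mul_le_self (x - a) N
          have h2 : (x - a) % N + (x - a) / N * N = x - a := Nat.mod_add_div' (x - a) N
          have h3 : (x - a) % N < N := Nat.mod_lt _ hNpos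
          exact ⟨⟨by omega, by omega⟩, hx.2⟩
      · exact Finset.mem_union_right _ (Finset.mem_Ico.2 ⟨hge, hx.1.2⟩)
    calc ((Finset.Ico a (a + n)).filter (fun x => x ∈ S)).card
        ≤ (((Finset.range m).biUnion blk) ∪ Finset.Ico (a + m * N) (a + n)).card :=
          Finset.card_le_card hsub
      _ ≤ ((Finset.range m).biUnion blk).card + (Finset.Ico (a + m * N) (a + n)).card :=
          Finset.card_union_le _ _
      _ ≤ (∑ j ∈ Finset.range m, cnt j) + N := by
          gcongr
          · exact Finset.card_biUnion_le
          · rw [Nat.card_Ico]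
            have h1 : n % N < N := Nat.mod_lt _ hNpos
            have h2 : m * N + n % N = n := by
              rw [hm, mul_comm]; exact Nat.div_add_mod n N
            omega
  -- Step B
  have hcnt_le : ∀ j, cnt j ≤ N := by
    intro j
    calc cnt j ≤ (Finset.Ico (a + j * N) (a + j * N + N)).card := Finset.card_filter_le _ _
      _ = N := by rw [Nat.card_Ico]; omega
  have stepB : (∑ j ∈ Finset.range m, cnt j) ≤ J.card * N + m := by
    rw [← Finset.sum_filter_add_sum_filter_not (Finset.range m) (fun j => 2 ≤ cnt j)]
    rw [← hJ]
    have h1 : (∑ j ∈ J, cnt j) ≤ J.card * N := by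
      rw [← smul_eq_mul]
      exact Finset.sum_le_card_nsmul _ _ _ (fun j _ => hcnt_le j)
    have h2 : (∑ j ∈ (Finset.range m).filter (fun j => ¬ 2 ≤ cnt j), cnt j)
        ≤ ((Finset.range m).filter (fun j => ¬ 2 ≤ cnt j)).card * 1 := by
      rw [← smul_eq_mul]
      refine Finset.sum_le_card_nsmul _ _ _ (fun j hj => ?_)
      simp only [Finset.mem_filter] at hj
      omega
    have h3 : ((Finset.range m).filter (fun j => ¬ 2 ≤ cnt j)).card ≤ m := by
      calc _ ≤ (Finset.range m).card := Finset.card_filter_le _ _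
        _ = m := Finset.card_range m
    omega
  -- Step C
  set U := (Finset.Ico a (a + n)).filter
    (fun x => ∃ k ∈ Finset.Icc 1 (N - 1), x ∈ S ∧ x + k ∈ S) with hU
  have stepC1 : J.card ≤ U.card := by
    set ψ : ℕ → ℕ := fun j => if h : (blk j).Nonempty then (blk j).min' h else 0 with hψ
    have hψ_mem : ∀ j ∈ J, ψ j ∈ blk j := by
      intro j hj
      simp only [hJ, Finset.mem_filter] at hj
      have hne : (blk j).Nonempty := Finset.card_pos.1 (show 0 < cnt j by omega)
      rw [hψ]; simp only [dif_pos hne]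
      exact Finset.min'_mem _ _
    refine Finset.card_le_card_of_injOn ψ ?_ ?_
    · intro j hj
      have hjm : j < m := by
        simp only [hJ, Finset.mem_coe, Finset.mem_filter, Finset.mem_range] at hj; exact hj.1
      have h2 : 2 ≤ cnt j := by
        simp only [hJ, Finset.mem_coe, Finset.mem_filter] at hj; exact hj.2
      have hx := hψ_mem j hj
      have hne : (blk j).Nonempty := ⟨ψ j, hx⟩
      obtain ⟨y, hy, hyne⟩ := Finset.exists_mem_ne (s := blk j) h2 (ψ j)
      have hmin : ψ j ≤ y := by
        rw [hψ]; simp only [dif_pos hne]; exact Finset.min'_le _ _ hy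
      have hlt : ψ j < y := lt_of_le_of_ne hmin (Ne.symm hyne)
      simp only [hblk, Finset.mem_filter, Finset.mem_Ico] at hx hy
      rw [hU]
      simp only [Finset.mem_coe, Finset.mem_filter]
      refine ⟨hblk_sub j hjm (hψ_mem j hj), y - ψ j, ?_, hx.2, ?_⟩
      · rw [Finset.mem_Icc]; omega
      · have : ψ j + (y - ψ j) = y := by omega
        rw [this]; exact hy.2
    · intro j1 hj1 j2 hj2 heq
      have hm1 := hψ_mem j1 hj1
      have hm2 := hψ_mem j2 hj2
      rw [heq] at hm1
      simp only [hblk, Finset.mem_filter, Finset.mem_Ico] at hm1 hm2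
      by_contra hne
      rcases Nat.lt_or_ge j1 j2 with h | h
      · have : (j1 + 1) * N ≤ j2 * N := Nat.mul_le_mul_right N (by omega)
        rw [Nat.succ_mul] at this
        omega
      · have h' : j2 < j1 := by omega
        have : (j2 + 1) * N ≤ j1 * N := Nat.mul_le_mul_right N (by omega)
        rw [Nat.succ_mul] at this
        omega
  have stepC2 : U.card ≤ ∑ k ∈ Finset.Icc 1 (N - 1), q k := by
    have hsub : U ⊆ (Finset.Icc 1 (N - 1)).biUnion
        (fun k => (Finset.Ico a (a + n)).filter (fun x => x ∈ S ∧ x + k ∈ S)) := by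
      intro x hx
      rw [hU] at hx
      simp only [Finset.mem_filter] at hx
      obtain ⟨hxI, k, hk, hxS⟩ := hx
      exact Finset.mem_biUnion.2 ⟨k, hk, Finset.mem_filter.2 ⟨hxI, hxS⟩⟩
    exact (Finset.card_le_card hsub).trans Finset.card_biUnion_le
  -- Step D
  have hKne : (Finset.Icc 1 (N - 1)).Nonempty := ⟨1, by rw [Finset.mem_Icc]; omega⟩
  obtain ⟨k₀, hk₀, hmax⟩ := Finset.exists_max_image (Finset.Icc 1 (N - 1)) q hKne
  have stepD : (∑ k ∈ Finset.Icc 1 (N - 1), q k) ≤ (N - 1) * q k₀ := by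
    have : (∑ k ∈ Finset.Icc 1 (N - 1), q k) ≤ (Finset.Icc 1 (N - 1)).card • q k₀ :=
      Finset.sum_le_card_nsmul _ _ _ (fun k hk => hmax k hk)
    rwa [Nat.card_Icc, smul_eq_mul, Nat.add_sub_cancel] at this
  refine ⟨k₀, hk₀, ?_⟩
  have hqeq : ({x | x ∈ S ∧ x + k₀ ∈ S} ∩ Set.Ico a (a + n)).ncard = q k₀ := by
    simp only [hq]
    rw [← Set.ncard_coe_finset]
    congr 1
    ext x
    simp [Set.mem_setOf_eq, and_comm]
  rw [hqeq]
  calc (S ∩ Set.Ico a (a + n)).ncard ≤ (∑ j ∈ Finset.range m, cnt j) + N := stepA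
    _ ≤ J.card * N + m + N := by omega
    _ ≤ (∑ k ∈ Finset.Icc 1 (N - 1), q k) * N + m + N := by
        have := stepC1.trans stepC2
        exact Nat.add_le_add_right (Nat.add_le_add_right (Nat.mul_le_mul_right N this) m) N
    _ ≤ (N - 1) * q k₀ * N + n / N + N := by
        have := Nat.mul_le_mul_right N stepD
        omega

set_option maxHeartbeats 1000000 in
theorem stmt_0 (S : Set ℕ) (hpos : ∀ n ∈ S, 0 < n)
    (hδ : 0 < banachDensity S) (N : ℕ) (hN : N = ⌊1 / banachDensity S⌋₊ + 1) :
    ∃ (k : ℕ) (Q : Set ℕ), 0 < k ∧ k ≤ N - 1 ∧ Q ⊆ S ∧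
      banachDensity Q ≥ ((N : ℝ) * banachDensity S - 1) / (2 * (N : ℝ) ^ 2 * ((N : ℝ) - 1)) ∧
      ((N : ℝ) * banachDensity S - 1) / (2 * (N : ℝ) ^ 2 * ((N : ℝ) - 1)) > 0 ∧
      ∀ a ∈ Q, a + k ∈ S := by
  set δ := banachDensity S with hδdef
  have hδ1 : δ ≤ 1 := bd_le_one S
  have hN2 : 2 ≤ N := by
    have h1 : (1:ℝ) ≤ 1/δ := by rw [le_div_iff₀ hδ]; linarith
    have h2 : 1 ≤ ⌊1/δ⌋₊ := Nat.le_floor (by exact_mod_cast h1)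
    omega
  have hNR : (2:ℝ) ≤ (N:ℝ) := by exact_mod_cast hN2
  have hNδ : 1 < (N:ℝ) * δ := by
    have h := Nat.lt_floor_add_one (1/δ)
    have h2 : 1/δ < (N:ℝ) := by rw [hN]; push_cast; exact h
    rw [div_lt_iff₀ hδ] at h2
    linarith
  set c := ((N:ℝ) * δ - 1) / (2 * (N:ℝ) ^ 2 * ((N:ℝ) - 1)) with hc
  have hden : (0:ℝ) < 2 * (N:ℝ) ^ 2 * ((N:ℝ) - 1) := by nlinarith
  have hcpos : 0 < c := div_pos (by linarith) hden
  set ε := ((N:ℝ) * δ - 1) / (4 * N) with hε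
  have hεpos : 0 < ε := div_pos (by linarith) (by linarith)
  obtain ⟨n₀', hn₀'⟩ := exists_nat_ge ((N:ℝ) / ε)
  set n₀ := n₀' + 1 with hn₀def
  have hn₀pos : 0 < n₀ := Nat.succ_pos _
  have hNεn₀ : (N:ℝ) ≤ ε * n₀ := by
    rw [div_le_iff₀ hεpos] at hn₀'
    have : (n₀' : ℝ) ≤ (n₀ : ℝ) := by exact_mod_cast Nat.le_succ _
    nlinarith
  have hfreq : ∃ᶠ n in atTop,
      δ - ε < ⨆ a : ℕ, ((S ∩ Set.Ico a (a + n)).ncard : ℝ) / n :=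
    Filter.frequently_lt_of_lt_limsup
      (Filter.isCoboundedUnder_le_of_le _ fun n => bd_f_nonneg S n)
      (sub_lt_self δ hεpos)
  have hfreq2 := hfreq.and_eventually (Filter.eventually_ge_atTop n₀)
  have hmain : ∃ᶠ n in atTop, ∃ k ∈ Finset.Icc 1 (N - 1),
      c ≤ ⨆ a : ℕ, (({x | x ∈ S ∧ x + k ∈ S} ∩ Set.Ico a (a + n)).ncard : ℝ) / n := by
    refine hfreq2.mono ?_
    rintro n ⟨hsup, hn₀n⟩
    obtain ⟨a, ha⟩ := exists_lt_of_lt_ciSup hsup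
    obtain ⟨k, hk, hkey⟩ := key S N hN2 n a
    refine ⟨k, hk, ?_⟩
    have hnpos : 0 < n := lt_of_lt_of_le hn₀pos hn₀n
    have hnR : (0:ℝ) < n := by exact_mod_cast hnpos
    set Q := {x | x ∈ S ∧ x + k ∈ S} with hQ
    set qr := ((Q ∩ Set.Ico a (a + n)).ncard : ℝ) with hqr
    have hqr0 : 0 ≤ qr := by positivity
    set s := ((S ∩ Set.Ico a (a + n)).ncard : ℝ) with hs
    have keyR : s ≤ ((N:ℝ) - 1) * qr * N + ((n / N : ℕ) : ℝ) + N := by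
      have := hkey
      have hcast : (((N - 1) * (Q ∩ Set.Ico a (a + n)).ncard * N + n / N + N : ℕ) : ℝ)
          = ((N:ℝ) - 1) * qr * N + ((n / N : ℕ) : ℝ) + N := by
        push_cast [Nat.cast_sub (by omega : 1 ≤ N)]
        ring
      calc s ≤ (((N - 1) * (Q ∩ Set.Ico a (a + n)).ncard * N + n / N + N : ℕ) : ℝ) := by
              rw [hs]; exact_mod_cast this
        _ = _ := hcast
    have hdivle : ((n / N : ℕ) : ℝ) ≤ (n : ℝ) / N := Nat.cast_div_le
    have hsgt : (δ - ε) * n < s := by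
      rw [← lt_div_iff₀ hnR]
      exact ha
    have hNn : (N:ℝ) ≤ ε * n := by
      have : (n₀ : ℝ) ≤ n := by exact_mod_cast hn₀n
      nlinarith
    have h4 : (δ - ε) * n - (n:ℝ) / N - ε * n = c * n * ((N:ℝ) * ((N:ℝ) - 1)) := by
      rw [hc, hε]
      have hN0 : (N:ℝ) ≠ 0 := by linarith
      have hN1 : (N:ℝ) - 1 ≠ 0 := by linarith
      field_simp
      ring
    have hring : ((N:ℝ) - 1) * qr * N = qr * ((N:ℝ) * ((N:ℝ) - 1)) := by ring
    have h5 : c * n * ((N:ℝ) * ((N:ℝ) - 1)) ≤ qr * ((N:ℝ) * ((N:ℝ) - 1)) := by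
      linarith [keyR, hdivle, hsgt, hNn, h4, hring]
    have hpos2 : (0:ℝ) < (N:ℝ) * ((N:ℝ) - 1) := mul_pos (by linarith) (by linarith)
    have h6 : c * n ≤ qr := le_of_mul_le_mul_right h5 hpos2
    have h7 : c ≤ qr / n := by
      rw [le_div_iff₀ hnR]
      exact h6
    exact h7.trans (le_ciSup (bd_bdd Q n) a)
  have hex : ∃ k ∈ Finset.Icc 1 (N - 1), ∃ᶠ n in atTop,
      c ≤ ⨆ a : ℕ, (({x | x ∈ S ∧ x + k ∈ S} ∩ Set.Ico a (a + n)).ncard : ℝ) / n := by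
    by_contra h
    push_neg at h
    have hev : ∀ᶠ n in atTop, ∀ k ∈ Finset.Icc 1 (N - 1),
        ¬ c ≤ ⨆ a : ℕ, (({x | x ∈ S ∧ x + k ∈ S} ∩ Set.Ico a (a + n)).ncard : ℝ) / n :=
      (Filter.eventually_all_finset _).2 fun k hk => (h k hk).mono fun n hn => by simpa using hn
    obtain ⟨n, hn1, hn2⟩ := (hmain.and_eventually hev).exists
    obtain ⟨k, hk, hck⟩ := hn1
    exact hn2 k hk hck
  obtain ⟨k, hk, hfreqk⟩ := hex
  rw [Finset.mem_Icc] at hk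
  refine ⟨k, {x | x ∈ S ∧ x + k ∈ S}, hk.1, hk.2, fun x hx => hx.1, ?_, hcpos, fun a ha => ha.2⟩
  exact Filter.le_limsup_of_frequently_le hfreqk
    (Filter.isBoundedUnder_of ⟨1, fun n => bd_f_le_one _ n⟩)
end

section
/- Let S be a set of positive integers with positive Banach density δ(S) > 0, let N = ⌊1/δ(S)⌋ + 1, and let P = { i ∈ ℕ : |{iN+1, iN+2, …, (i+1)N} ∩ S| ≥ 2 }. Then the Banach density of P satisfies δ(P) ≥ (δ(S) − 1/N)/2. -/
open Filter


noncomputable def bdF (T : Set ℕ) (n : ℕ) : ℝ :=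
  ⨆ a : ℕ, ((T ∩ Set.Ico a (a + n)).ncard : ℝ) / n

private lemma term_le_one (T : Set ℕ) (a n : ℕ) :
    ((T ∩ Set.Ico a (a + n)).ncard : ℝ) / n ≤ 1 := by
  rcases Nat.eq_zero_or_pos n with rfl | hn
  · simp
  · rw [div_le_one (by positivity)]
    have h1 : (T ∩ Set.Ico a (a + n)).ncard ≤ (Set.Ico a (a + n)).ncard :=
      Set.ncard_le_ncard Set.inter_subset_right (Set.finite_Ico _ _)
    have h2 : (Set.Ico a (a + n)).ncard = n := by
      rw [← Finset.coe_Ico, Set.ncard_coe_finset, Nat.card_Ico]; omega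
    exact_mod_cast h1.trans_eq h2

private lemma bddA (T : Set ℕ) (n : ℕ) :
    BddAbove (Set.range fun a : ℕ => ((T ∩ Set.Ico a (a + n)).ncard : ℝ) / n) := by
  refine ⟨1, ?_⟩
  rintro x ⟨a, rfl⟩
  exact term_le_one T a n

private lemma bdF_le_one (T : Set ℕ) (n : ℕ) : bdF T n ≤ 1 :=
  ciSup_le fun a => term_le_one T a n

private lemma bdF_nonneg (T : Set ℕ) (n : ℕ) : 0 ≤ bdF T n :=
  le_trans (by positivity) (le_ciSup (bddA T n) 0)

private lemma term_le_bdF (T : Set ℕ) (a n : ℕ) :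
    ((T ∩ Set.Ico a (a + n)).ncard : ℝ) / n ≤ bdF T n :=
  le_ciSup (bddA T n) a

private lemma cover (S : Set ℕ) (hpos : ∀ n ∈ S, 0 < n) (N : ℕ) (hN1 : 1 ≤ N) (b n : ℕ) :
    ∃ a : ℕ, S ∩ Set.Ico b (b + n) ⊆ S ∩ Set.Icc (a * N + 1) ((a + (n / N + 2)) * N) := by
  set b' := max b 1 with hb'
  refine ⟨(b' - 1) / N, ?_⟩
  rintro x ⟨hxS, hx1, hx2⟩
  have hx0 : 1 ≤ x := hpos x hxS
  set a := (b' - 1) / N with ha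
  have h1 : a * N ≤ b' - 1 := Nat.div_mul_le_self _ _
  have h2 : N * a + (b' - 1) % N = b' - 1 := by rw [ha]; exact Nat.div_add_mod _ _
  have h2' : (b' - 1) % N < N := Nat.mod_lt _ (by omega)
  have h3 := Nat.div_add_mod n N
  have h3' : n % N < N := Nat.mod_lt _ (by omega)
  have hexp : (a + (n / N + 2)) * N = N * a + N * (n / N) + 2 * N := by ring
  have haN : N * a = a * N := by ring
  have hbb : b ≤ b' := le_max_left _ _
  have hb1 : 1 ≤ b' := le_max_right _ _
  have hbx : b' ≤ x := max_le hx1 hx0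
  exact ⟨hxS, by omega, by omega⟩


private lemma ncard_Ico' (a b : ℕ) : (Set.Ico a b).ncard = b - a := by
  rw [← Finset.coe_Ico, Set.ncard_coe_finset, Nat.card_Ico]

private lemma ncard_Icc' (a b : ℕ) : (Set.Icc a b).ncard = b + 1 - a := by
  rw [← Finset.coe_Icc, Set.ncard_coe_finset, Nat.card_Icc]

private lemma finIco (S : Set ℕ) (a b : ℕ) : (S ∩ Set.Ico a b).Finite :=
  (Set.finite_Ico a b).inter_of_right S

private lemma finIcc (S : Set ℕ) (a b : ℕ) : (S ∩ Set.Icc a b).Finite :=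
  (Set.finite_Icc a b).inter_of_right S

private lemma block_bound (S P : Set ℕ) (N : ℕ)
    (hP : P = {i : ℕ | 2 ≤ (S ∩ Set.Icc (i * N + 1) ((i + 1) * N)).ncard}) :
    ∀ a m : ℕ, (S ∩ Set.Icc (a * N + 1) ((a + m) * N)).ncard
      ≤ m + N * (P ∩ Set.Ico a (a + m)).ncard := by
  intro a m
  induction m with
  | zero =>
    have he : (a + 0) * N = a * N := by ring
    have : Set.Icc (a * N + 1) ((a + 0) * N) = ∅ := Set.Icc_eq_empty (by omega)
    simp [this]
  | succ m ih =>
    have hsub : S ∩ Set.Icc (a * N + 1) ((a + (m + 1)) * N)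
        ⊆ (S ∩ Set.Icc (a * N + 1) ((a + m) * N))
          ∪ (S ∩ Set.Icc ((a + m) * N + 1) ((a + m + 1) * N)) := by
      intro x ⟨hxS, hx1, hx2⟩
      have he : (a + (m + 1)) * N = (a + m) * N + N := by ring
      have he2 : (a + m + 1) * N = (a + m) * N + N := by ring
      rcases le_or_gt x ((a + m) * N) with h | h
      · exact Or.inl ⟨hxS, hx1, h⟩
      · exact Or.inr ⟨hxS, by omega, by omega⟩
    have h1 : (S ∩ Set.Icc (a * N + 1) ((a + (m + 1)) * N)).ncard
        ≤ (S ∩ Set.Icc (a * N + 1) ((a + m) * N)).ncard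
          + (S ∩ Set.Icc ((a + m) * N + 1) ((a + m + 1) * N)).ncard := by
      refine le_trans (Set.ncard_le_ncard hsub ((finIcc S _ _).union (finIcc S _ _))) ?_
      exact Set.ncard_union_le _ _
    by_cases hm : (a + m) ∈ P
    · have hblock : (S ∩ Set.Icc ((a + m) * N + 1) ((a + m + 1) * N)).ncard ≤ N := by
        refine le_trans (Set.ncard_le_ncard Set.inter_subset_right (Set.finite_Icc _ _)) ?_
        rw [ncard_Icc']
        have : (a + m + 1) * N = (a + m) * N + N := by ring
        omega
      have hins : P ∩ Set.Ico a (a + (m + 1))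
          = insert (a + m) (P ∩ Set.Ico a (a + m)) := by
        ext x
        simp only [Set.mem_inter_iff, Set.mem_Ico, Set.mem_insert_iff]
        constructor
        · rintro ⟨hxP, hx1, hx2⟩
          rcases eq_or_lt_of_le (Nat.lt_succ_iff.mp (by omega) : x ≤ a + m) with h | h
          · exact Or.inl h
          · exact Or.inr ⟨hxP, hx1, h⟩
        · rintro (rfl | ⟨hxP, hx1, hx2⟩)
          · exact ⟨hm, by omega, by omega⟩
          · exact ⟨hxP, hx1, by omega⟩
      have hcard : (P ∩ Set.Ico a (a + (m + 1))).ncard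
          = (P ∩ Set.Ico a (a + m)).ncard + 1 := by
        rw [hins, Set.ncard_insert_of_notMem (by simp) (finIco P _ _)]
      rw [hcard, Nat.mul_add, Nat.mul_one]
      omega
    · have hblock : (S ∩ Set.Icc ((a + m) * N + 1) ((a + m + 1) * N)).ncard ≤ 1 := by
        by_contra hc
        apply hm
        rw [hP]
        simp only [Set.mem_setOf_eq]
        omega
      have hfix : P ∩ Set.Ico a (a + (m + 1)) = P ∩ Set.Ico a (a + m) := by
        ext x
        simp only [Set.mem_inter_iff, Set.mem_Ico]
        constructor
        · rintro ⟨hxP, hx1, hx2⟩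
          refine ⟨hxP, hx1, ?_⟩
          rcases eq_or_lt_of_le (Nat.lt_succ_iff.mp (by omega) : x ≤ a + m) with h | h
          · exact absurd (h ▸ hxP) hm
          · exact h
        · rintro ⟨hxP, hx1, hx2⟩
          exact ⟨hxP, hx1, by omega⟩
      rw [hfix] at *
      omega

private lemma chain (S P : Set ℕ) (hpos : ∀ n ∈ S, 0 < n) (N : ℕ) (hN1 : 1 ≤ N)
    (hP : P = {i : ℕ | 2 ≤ (S ∩ Set.Icc (i * N + 1) ((i + 1) * N)).ncard})
    (n : ℕ) (hn : 1 ≤ n) :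
    bdF S n ≤ bdF P (n / N + 2) + 1 / N + 4 * N / n := by
  set M := n / N + 2 with hM
  refine ciSup_le fun b => ?_
  obtain ⟨a, hsub⟩ := cover S hpos N hN1 b n
  have hc : (S ∩ Set.Ico b (b + n)).ncard ≤ M + N * (P ∩ Set.Ico a (a + M)).ncard := by
    refine le_trans (Set.ncard_le_ncard hsub ((Set.finite_Icc _ _).inter_of_right S)) ?_
    exact block_bound S P N hP a M
  set c := (S ∩ Set.Ico b (b + n)).ncard with hcdef
  set k := (P ∩ Set.Ico a (a + M)).ncard with hkdef
  set gP := bdF P M with hg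
  have hMpos : (0:ℝ) < M := by positivity
  have hnpos : (0:ℝ) < n := by exact_mod_cast hn
  have hNpos : (0:ℝ) < N := by exact_mod_cast hN1
  have hk : (k:ℝ) ≤ gP * M := by
    have := term_le_bdF P a M
    rw [div_le_iff₀ hMpos] at this
    exact this
  have hMn : M * N ≤ n + 2 * N := by
    have h3 := Nat.div_add_mod n N
    have hexp : M * N = N * (n / N) + 2 * N := by rw [hM]; ring
    omega
  have hMnR : (M:ℝ) * N ≤ n + 2 * N := by exact_mod_cast hMn
  have hcR : (c:ℝ) ≤ M + N * k := by exact_mod_cast hc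
  have hg0 : 0 ≤ gP := bdF_nonneg P M
  have hg1 : gP ≤ 1 := bdF_le_one P M
  rw [div_le_iff₀ hnpos]
  have hiden : (gP + 1 / N + 4 * N / n) * n * N = gP * n * N + n + 4 * N * N := by
    field_simp
  have hN1R : (1:ℝ) ≤ N := by exact_mod_cast hN1
  have hkey : (c:ℝ) * N ≤ gP * n * N + n + 4 * N * N := by
    have e1 : (c:ℝ) * N ≤ ((M:ℝ) + N * k) * N :=
      mul_le_mul_of_nonneg_right hcR hNpos.le
    have e2 : ((M:ℝ) + N * k) * N = M * N + N * N * k := by ring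
    have e3 : (N:ℝ) * N * k ≤ N * N * (gP * M) :=
      mul_le_mul_of_nonneg_left hk (by positivity)
    have e4 : (N:ℝ) * N * (gP * M) = (gP * N) * ((M:ℝ) * N) := by ring
    have e5 : (gP * (N:ℝ)) * ((M:ℝ) * N) ≤ (gP * N) * ((n:ℝ) + 2 * N) :=
      mul_le_mul_of_nonneg_left hMnR (by positivity)
    have e6 : (gP * (N:ℝ)) * ((n:ℝ) + 2 * N) = gP * n * N + 2 * N * N * gP := by ring
    have e7 : 2 * (N:ℝ) * N * gP ≤ 2 * N * N := by nlinarith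
    have e8 : (M:ℝ) * N ≤ (n:ℝ) + 2 * N := hMnR
    have e9 : (2:ℝ) * N ≤ 2 * N * N := by nlinarith
    have e10 : (M:ℝ) ≤ M * N := by nlinarith [hMpos]
    linarith
  have : (c:ℝ) * N ≤ (gP + 1 / N + 4 * N / n) * n * N := by rw [hiden]; exact hkey
  exact le_of_mul_le_mul_right this hNpos

theorem stmt_1 (S : Set ℕ) (hpos : ∀ n ∈ S, 0 < n)
    (hδ : 0 < banachDensity S) (N : ℕ) (hN : N = ⌊1 / banachDensity S⌋₊ + 1)
    (P : Set ℕ) (hP : P = {i : ℕ | 2 ≤ (S ∩ Set.Icc (i * N + 1) ((i + 1) * N)).ncard}) :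
    banachDensity P ≥ (banachDensity S - 1 / (N : ℝ)) / 2 := by
  have hS : banachDensity S = limsup (bdF S) atTop := rfl
  have hPd : banachDensity P = limsup (bdF P) atTop := rfl
  set d := banachDensity S with hd
  set dP := banachDensity P with hdP
  have hN1 : 1 ≤ N := by omega
  have hNposR : (0:ℝ) < N := by exact_mod_cast hN1
  -- 1/N < d
  have hinv : 1 / d < (N : ℝ) := by
    rw [hN]
    push_cast
    exact Nat.lt_floor_add_one _
  have h1N : 1 / (N:ℝ) < d := by
    rw [div_lt_iff₀ hNposR]
    rw [div_lt_iff₀ hδ] at hinv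
    linarith
  -- main estimate
  have hmain : ∀ ε : ℝ, 0 < ε → d - 1 / N ≤ dP + ε := by
    intro ε hε
    have hfreq : ∃ᶠ n in atTop, d - ε / 2 < bdF S n := by
      refine frequently_lt_of_lt_limsup ?_ (by rw [hS]; linarith)
      exact isCoboundedUnder_le_of_le atTop fun n => bdF_nonneg S n
    have key : ∃ᶠ m in atTop, d - 1 / N - ε ≤ bdF P m := by
      rw [frequently_atTop] at hfreq ⊢
      intro M
      set K := ⌈(8 * (N:ℝ)) / ε⌉₊ + 1 with hK
      obtain ⟨n, hn, hfn⟩ := hfreq (max (N * M) K)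
      have hnK : K ≤ n := le_trans (le_max_right _ _) hn
      have hn1 : 1 ≤ n := by omega
      refine ⟨n / N + 2, ?_, ?_⟩
      · have hNM : N * M ≤ n := le_trans (le_max_left _ _) hn
        have hMN : M * N ≤ n := by rw [Nat.mul_comm]; exact hNM
        have := (Nat.le_div_iff_mul_le (by omega : 0 < N)).mpr hMN
        omega
      · have hch := chain S P hpos N hN1 hP n hn1
        have hsmall : 4 * (N:ℝ) / n ≤ ε / 2 := by
          have h1 : (8 * (N:ℝ)) / ε ≤ K := by
            rw [hK]; push_cast
            exact le_trans (Nat.le_ceil _) (by linarith [Nat.le_ceil ((8 * (N:ℝ)) / ε)])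
          have h2 : (8 * (N:ℝ)) / ε ≤ n := le_trans h1 (by exact_mod_cast hnK)
          have hn0 : (0:ℝ) < n := by exact_mod_cast hn1
          rw [div_le_iff₀ hε] at h2
          rw [div_le_iff₀ hn0]
          nlinarith
        linarith
    have hle : d - 1 / N - ε ≤ limsup (bdF P) atTop := by
      refine le_limsup_of_frequently_le key ?_
      exact isBoundedUnder_of ⟨1, fun m => bdF_le_one P m⟩
    rw [← hPd] at hle
    linarith
  have hfin : d - 1 / N ≤ dP := le_of_forall_pos_le_add hmain
  linarith
end

section
/- Let X be a Noetherian topological space, let Φ : X → X be a continuous map, let x ∈ X, let Y be a closed subset of X, and let S = { n ∈ ℕ : Φⁿ(x) ∈ Y }, where Φⁿ denotes the n-th iterate of Φ. If S has positive Banach density, then S contains an infinite arithmetic progression. -/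
open Filter Topology Set

section aux
variable {X : Type*} (Φ : X → X) (x : X)

def visitsAux (Z : Set X) : Set ℕ := {n | Φ^[n] x ∈ Z}

noncomputable def cntAux (Z : Set X) (a L : ℕ) : ℕ :=
  (visitsAux Φ x Z ∩ Set.Ico a (a + L)).ncard

lemma cnt_le (Z : Set X) (a L : ℕ) : cntAux Φ x Z a L ≤ L := by
  unfold cntAux
  have h1 : (visitsAux Φ x Z ∩ Set.Ico a (a + L)).ncard ≤ (Set.Ico a (a+L)).ncard :=
    Set.ncard_le_ncard inter_subset_right (Set.finite_Ico _ _)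
  have h2 : (Set.Ico a (a+L)).ncard = L := by
    rw [Set.ncard_eq_toFinset_card']; simp
  omega

lemma cnt_mono {Z W : Set X} (h : Z ⊆ W) (a L : ℕ) :
    cntAux Φ x Z a L ≤ cntAux Φ x W a L := by
  apply Set.ncard_le_ncard
  · exact inter_subset_inter_left _ (fun n hn => h hn)
  · exact (Set.finite_Ico _ _).inter_of_right _

lemma visits_union (Z W : Set X) :
    visitsAux Φ x (Z ∪ W) = visitsAux Φ x Z ∪ visitsAux Φ x W := rfl

lemma visits_inter (Z W : Set X) :
    visitsAux Φ x (Z ∩ W) = visitsAux Φ x Z ∩ visitsAux Φ x W := rfl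

lemma cnt_union_inter (Z W : Set X) (a L : ℕ) :
    cntAux Φ x (Z ∪ W) a L + cntAux Φ x (Z ∩ W) a L
      = cntAux Φ x Z a L + cntAux Φ x W a L := by
  unfold cntAux
  rw [visits_union, visits_inter, Set.union_inter_distrib_right]
  have : visitsAux Φ x Z ∩ visitsAux Φ x W ∩ Set.Ico a (a+L)
      = (visitsAux Φ x Z ∩ Set.Ico a (a+L)) ∩ (visitsAux Φ x W ∩ Set.Ico a (a+L)) := by
    ext n; simp [and_assoc]; tauto
  rw [this]
  exact Set.ncard_union_add_ncard_inter _ _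
    ((Set.finite_Ico _ _).inter_of_right _) ((Set.finite_Ico _ _).inter_of_right _)

lemma cnt_shift (Z : Set X) (a L : ℕ) :
    cntAux Φ x (Φ ⁻¹' Z) a L = cntAux Φ x Z (a+1) L := by
  unfold cntAux
  have himg : (· + 1) '' (visitsAux Φ x (Φ ⁻¹' Z) ∩ Set.Ico a (a + L))
      = visitsAux Φ x Z ∩ Set.Ico (a+1) (a+1+L) := by
    ext m
    simp only [Set.mem_image, Set.mem_inter_iff, Set.mem_Ico, visitsAux, Set.mem_setOf_eq,
      Set.mem_preimage]
    constructor
    · rintro ⟨n, ⟨hv, hn1, hn2⟩, rfl⟩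
      rw [Function.iterate_succ_apply']
      exact ⟨hv, by omega, by omega⟩
    · rintro ⟨hv, h1, h2⟩
      refine ⟨m - 1, ⟨?_, by omega, by omega⟩, by omega⟩
      rw [← Function.iterate_succ_apply' Φ (m-1) x]
      have h3 : (m - 1).succ = m := by omega
      rw [h3]; exact hv
  calc (visitsAux Φ x (Φ ⁻¹' Z) ∩ Set.Ico a (a + L)).ncard
      = ((· + 1) '' (visitsAux Φ x (Φ ⁻¹' Z) ∩ Set.Ico a (a + L))).ncard :=
        (Set.ncard_image_of_injective _ (add_left_injective 1)).symm
    _ = _ := by rw [himg]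

lemma cnt_adj (Z : Set X) (a L : ℕ) :
    cntAux Φ x Z a L ≤ cntAux Φ x Z (a+1) L + 1 ∧
    cntAux Φ x Z (a+1) L ≤ cntAux Φ x Z a L + 1 := by
  have hfin : ∀ b M, (visitsAux Φ x Z ∩ Set.Ico b (b+M)).Finite :=
    fun b M => (Set.finite_Ico _ _).inter_of_right _
  constructor
  · have hsub : visitsAux Φ x Z ∩ Set.Ico a (a+L)
        ⊆ (visitsAux Φ x Z ∩ Set.Ico (a+1) (a+1+L)) ∪ {a} := by
      rintro n ⟨hv, h1, h2⟩
      rcases eq_or_ne n a with rfl | hne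
      · exact Or.inr rfl
      · exact Or.inl ⟨hv, by omega, by omega⟩
    calc cntAux Φ x Z a L ≤ ((visitsAux Φ x Z ∩ Set.Ico (a+1) (a+1+L)) ∪ {a}).ncard :=
          Set.ncard_le_ncard hsub ((hfin _ _).union (Set.finite_singleton _))
      _ ≤ cntAux Φ x Z (a+1) L + ({a} : Set ℕ).ncard := Set.ncard_union_le _ _
      _ = cntAux Φ x Z (a+1) L + 1 := by rw [Set.ncard_singleton]
  · have hsub : visitsAux Φ x Z ∩ Set.Ico (a+1) (a+1+L)
        ⊆ (visitsAux Φ x Z ∩ Set.Ico a (a+L)) ∪ {a+L} := by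
      rintro n ⟨hv, h1, h2⟩
      rcases eq_or_ne n (a+L) with rfl | hne
      · exact Or.inr rfl
      · exact Or.inl ⟨hv, by omega, by omega⟩
    calc cntAux Φ x Z (a+1) L ≤ ((visitsAux Φ x Z ∩ Set.Ico a (a+L)) ∪ {a+L}).ncard :=
          Set.ncard_le_ncard hsub ((hfin _ _).union (Set.finite_singleton _))
      _ ≤ cntAux Φ x Z a L + ({a+L} : Set ℕ).ncard := Set.ncard_union_le _ _
      _ = cntAux Φ x Z a L + 1 := by rw [Set.ncard_singleton]

end aux

theorem stmt_6 {X : Type*} [TopologicalSpace X] [TopologicalSpace.NoetherianSpace X]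
    (Φ : X → X) (hΦ : Continuous Φ) (x : X) (Y : Set X) (hY : IsClosed Y)
    (hδ : 0 < banachDensity {n : ℕ | Φ^[n] x ∈ Y}) :
    ∃ a d : ℕ, 0 < d ∧
      {m : ℕ | ∃ n : ℕ, m = a + n * d} ⊆ {n : ℕ | Φ^[n] x ∈ Y} := by
  classical
  set δ := banachDensity {n : ℕ | Φ^[n] x ∈ Y} with hδdef
  set T : Set ℕ := {n : ℕ | ∃ a : ℕ, δ/2 * n < (cntAux Φ x Y a n : ℝ)} with hTdef
  -- Step 1: frequently there are intervals with many visits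
  have h1 : ∃ᶠ n in atTop, n ∈ T := by
    by_contra hcon
    rw [not_frequently] at hcon
    have hev : ∀ᶠ n in atTop,
        (⨆ a : ℕ, (({n : ℕ | Φ^[n] x ∈ Y} ∩ Set.Ico a (a + n)).ncard : ℝ) / n) ≤ δ/2 := by
      refine hcon.mono (fun n hn => ?_)
      simp only [hTdef, Set.mem_setOf_eq, not_exists, not_lt] at hn
      apply Real.iSup_le (fun a => ?_) (by linarith)
      rcases Nat.eq_zero_or_pos n with h | h
      · subst h; simp; linarith
      · rw [div_le_iff₀ (by exact_mod_cast h)]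
        exact hn a
    have hcb : IsCoboundedUnder (· ≤ ·) atTop
        (fun n : ℕ => ⨆ a : ℕ, (({n : ℕ | Φ^[n] x ∈ Y} ∩ Set.Ico a (a + n)).ncard : ℝ) / n) :=
      isCoboundedUnder_le_of_le atTop (x := 0)
        (fun n => Real.iSup_nonneg (fun a => by positivity))
    have h2 : δ ≤ δ/2 := limsup_le_of_le hcb hev
    linarith
  have hne : (atTop ⊓ 𝓟 T).NeBot := by
    rw [← frequently_mem_iff_neBot]
    exact h1
  set 𝒰 : Ultrafilter ℕ := Ultrafilter.of (atTop ⊓ 𝓟 T) with h𝒰def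
  have hle : (𝒰 : Filter ℕ) ≤ atTop ⊓ 𝓟 T := Ultrafilter.of_le _
  have h𝒰top : (𝒰 : Filter ℕ) ≤ atTop := hle.trans inf_le_left
  have h𝒰T : ∀ᶠ n in (𝒰 : Filter ℕ), n ∈ T := by
    have h2 : T ∈ (𝒰 : Filter ℕ) := le_principal_iff.mp (hle.trans inf_le_right)
    exact h2
  -- choose good interval start points
  have hAex : ∀ n : ℕ, ∃ a : ℕ, n ∈ T → δ/2 * n < (cntAux Φ x Y a n : ℝ) := by
    intro n
    by_cases h : n ∈ T
    · obtain ⟨a, ha⟩ := h; exact ⟨a, fun _ => ha⟩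
    · exact ⟨0, fun h' => absurd h' h⟩
  choose A hA using hAex
  -- the invariant "measure"
  have hmem01 : ∀ (Z : Set X) (n : ℕ), ((cntAux Φ x Z (A n) n : ℝ)/n) ∈ Set.Icc (0:ℝ) 1 := by
    intro Z n
    constructor
    · positivity
    · rcases Nat.eq_zero_or_pos n with h | h
      · subst h; simp
      · rw [div_le_one (by exact_mod_cast h)]
        exact_mod_cast cnt_le Φ x Z (A n) n
  have main : ∀ Z : Set X, ∃ L : ℝ, 0 ≤ L ∧ L ≤ 1 ∧
      Tendsto (fun n => (cntAux Φ x Z (A n) n : ℝ)/n) (𝒰 : Filter ℕ) (𝓝 L) := by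
    intro Z
    have hle' : (↑(𝒰.map (fun n => (cntAux Φ x Z (A n) n : ℝ)/n)) : Filter ℝ)
        ≤ 𝓟 (Set.Icc (0:ℝ) 1) := by
      rw [Ultrafilter.coe_map]
      exact le_principal_iff.mpr (mem_map.mpr (univ_mem' (fun n => hmem01 Z n)))
    obtain ⟨L, hL, hconv⟩ := (isCompact_Icc (a := (0:ℝ)) (b := 1)).ultrafilter_le_nhds
      (𝒰.map (fun n => (cntAux Φ x Z (A n) n : ℝ)/n)) hle'
    refine ⟨L, hL.1, hL.2, ?_⟩
    rwa [Ultrafilter.coe_map] at hconv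
  choose μ hμ0 hμ1 hμt using main
  -- basic properties
  have hmono : ∀ Z W : Set X, Z ⊆ W → μ Z ≤ μ W := by
    intro Z W h
    refine le_of_tendsto_of_tendsto' (hμt Z) (hμt W) (fun n => ?_)
    rcases Nat.eq_zero_or_pos n with hn | hn
    · subst hn; simp
    · have hle2 : (cntAux Φ x Z (A n) n : ℝ) ≤ (cntAux Φ x W (A n) n : ℝ) := by
        exact_mod_cast cnt_mono Φ x h (A n) n
      gcongr
  have hadd : ∀ Z W : Set X, μ (Z ∪ W) + μ (Z ∩ W) = μ Z + μ W := by
    intro Z W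
    have hpt : (fun n => (cntAux Φ x (Z ∪ W) (A n) n : ℝ)/n + (cntAux Φ x (Z ∩ W) (A n) n : ℝ)/n)
        = (fun n => (cntAux Φ x Z (A n) n : ℝ)/n + (cntAux Φ x W (A n) n : ℝ)/n) := by
      funext n
      rw [← add_div, ← add_div]
      congr 1
      exact_mod_cast cnt_union_inter Φ x Z W (A n) n
    have t1 := (hμt (Z ∪ W)).add (hμt (Z ∩ W))
    rw [hpt] at t1
    exact tendsto_nhds_unique t1 ((hμt Z).add (hμt W))
  have hsub2 : ∀ Z W : Set X, μ (Z ∪ W) ≤ μ Z + μ W := by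
    intro Z W
    have := hadd Z W
    have h0 := hμ0 (Z ∩ W)
    linarith
  have hsubN : ∀ (G : ℕ → Set X) (N : ℕ),
      μ (⋃ i ∈ Finset.range N, G i) ≤ ∑ i ∈ Finset.range N, μ (G i) := by
    intro G N
    induction N with
    | zero =>
        simp only [Finset.range_zero, Finset.sum_empty]
        have : (⋃ i ∈ (∅ : Finset ℕ), G i) = (∅ : Set X) := by simp
        rw [this]
        -- μ ∅ ≤ 0
        have hpt : (fun n => (cntAux Φ x (∅ : Set X) (A n) n : ℝ)/n) = (fun _ => (0:ℝ)) := by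
          funext n
          have : cntAux Φ x (∅ : Set X) (A n) n = 0 := by
            unfold cntAux visitsAux
            simp
          rw [this]; simp
        have t1 := hμt (∅ : Set X)
        rw [hpt] at t1
        have := tendsto_nhds_unique t1 tendsto_const_nhds
        linarith [this.le]
    | succ N ih =>
        rw [Finset.range_add_one, Finset.sum_insert Finset.notMem_range_self]
        have hU : (⋃ i ∈ insert N (Finset.range N), G i)
            = G N ∪ ⋃ i ∈ Finset.range N, G i := by
          simp [Set.biUnion_insert]
        rw [hU]
        calc μ (G N ∪ ⋃ i ∈ Finset.range N, G i)
            ≤ μ (G N) + μ (⋃ i ∈ Finset.range N, G i) := hsub2 _ _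
          _ ≤ μ (G N) + ∑ i ∈ Finset.range N, μ (G i) := by linarith [ih]
  have hshift : ∀ Z : Set X, μ (Φ ⁻¹' Z) = μ Z := by
    intro Z
    have hd : ∀ n : ℕ, ‖(cntAux Φ x (Φ ⁻¹' Z) (A n) n : ℝ)/n - (cntAux Φ x Z (A n) n : ℝ)/n‖
        ≤ 1/(n:ℝ) := by
      intro n
      rw [cnt_shift, div_sub_div_same, Real.norm_eq_abs]
      rcases Nat.eq_zero_or_pos n with hn | hn
      · subst hn; simp
      · rw [abs_div, abs_of_nonneg (by positivity : (0:ℝ) ≤ (n:ℝ))]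
        gcongr
        obtain ⟨ha1, ha2⟩ := cnt_adj Φ x Z (A n) n
        rw [abs_le]
        constructor
        · have : (cntAux Φ x Z (A n) n : ℝ) ≤ (cntAux Φ x Z (A n + 1) n : ℝ) + 1 := by
            exact_mod_cast ha1
          linarith
        · have : (cntAux Φ x Z (A n + 1) n : ℝ) ≤ (cntAux Φ x Z (A n) n : ℝ) + 1 := by
            exact_mod_cast ha2
          linarith
    have hz : Tendsto (fun n => (cntAux Φ x (Φ ⁻¹' Z) (A n) n : ℝ)/n
        - (cntAux Φ x Z (A n) n : ℝ)/n) (𝒰 : Filter ℕ) (𝓝 0) :=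
      squeeze_zero_norm hd (tendsto_one_div_atTop_nhds_zero_nat.mono_left h𝒰top)
    have t1 := hz.add (hμt Z)
    rw [zero_add] at t1
    have hfe : (fun n => ((cntAux Φ x (Φ ⁻¹' Z) (A n) n : ℝ)/n
        - (cntAux Φ x Z (A n) n : ℝ)/n) + (cntAux Φ x Z (A n) n : ℝ)/n)
        = (fun n => (cntAux Φ x (Φ ⁻¹' Z) (A n) n : ℝ)/n) := by
      funext n; ring
    rw [hfe] at t1
    exact tendsto_nhds_unique (hμt (Φ ⁻¹' Z)) t1
  have hshiftIter : ∀ (j : ℕ) (Z : Set X), μ (Φ^[j] ⁻¹' Z) = μ Z := by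
    intro j
    induction j with
    | zero => intro Z; simp
    | succ j ih =>
        intro Z
        have : Φ^[j+1] ⁻¹' Z = Φ ⁻¹' (Φ^[j] ⁻¹' Z) := by
          rw [Function.iterate_succ, Set.preimage_comp]
        rw [this, hshift, ih]
  have hμY : 0 < μ Y := by
    have hge : δ/2 ≤ μ Y := by
      refine ge_of_tendsto (hμt Y) (h𝒰T.mono (fun n hn => ?_))
      have hlt := hA n hn
      have hn0 : 0 < n := by
        by_contra h0
        push_neg at h0
        interval_cases n
        have := cnt_le Φ x Y (A 0) 0
        interval_cases (cntAux Φ x Y (A 0) 0)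
        simp at hlt
      rw [le_div_iff₀ (by exact_mod_cast hn0)]
      linarith
    linarith
  have hvisit : ∀ Z : Set X, 0 < μ Z → ∃ n : ℕ, Φ^[n] x ∈ Z := by
    intro Z hZ
    by_contra hno
    push_neg at hno
    have hv : visitsAux Φ x Z = ∅ := by
      ext n; simp [visitsAux, hno n]
    have hpt : (fun n => (cntAux Φ x Z (A n) n : ℝ)/n) = (fun _ => (0:ℝ)) := by
      funext n
      unfold cntAux
      rw [hv]
      simp
    have t1 := hμt Z
    rw [hpt] at t1
    have := tendsto_nhds_unique t1 tendsto_const_nhds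
    linarith
  -- Noetherian minimality
  set 𝒮 : Set (TopologicalSpace.Closeds X) :=
    {Z : TopologicalSpace.Closeds X | (Z : Set X) ⊆ Y ∧ 0 < μ (Z : Set X)} with h𝒮def
  have h𝒮ne : 𝒮.Nonempty := ⟨⟨Y, hY⟩, subset_rfl, hμY⟩
  obtain ⟨C, hC𝒮, hCmin⟩ :=
    (wellFounded_lt (α := TopologicalSpace.Closeds X)).has_min 𝒮 h𝒮ne
  obtain ⟨hCY, hCμ⟩ := hC𝒮
  -- Poincaré recurrence
  have hrec : ∃ d : ℕ, 0 < d ∧ 0 < μ ((C : Set X) ∩ Φ^[d] ⁻¹' (C : Set X)) := by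
    by_contra hcon
    push_neg at hcon
    have hzero : ∀ d : ℕ, 0 < d → μ ((C : Set X) ∩ Φ^[d] ⁻¹' (C : Set X)) = 0 := by
      intro d hd
      exact le_antisymm (hcon d hd) (hμ0 _)
    set E : ℕ → Set X := fun N => ⋃ i ∈ Finset.range N, Φ^[i] ⁻¹' (C : Set X) with hEdef
    have hEs : ∀ N, E (N+1) = (C : Set X) ∪ Φ ⁻¹' (E N) := by
      intro N
      ext z
      simp only [hEdef, Set.mem_iUnion, Set.mem_preimage, Finset.mem_range, Set.mem_union,
        exists_prop]
      constructor
      · rintro ⟨i, hi, hz⟩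
        rcases Nat.eq_zero_or_pos i with h0 | h0
        · subst h0; left; simpa using hz
        · right
          exact ⟨i - 1, by omega, by
            rw [← Function.iterate_succ_apply]
            have : (i-1).succ = i := by omega
            rw [this]; exact hz⟩
      · rintro (hz | ⟨i, hi, hz⟩)
        · exact ⟨0, by omega, by simpa using hz⟩
        · exact ⟨i + 1, by omega, by rw [Function.iterate_succ_apply]; exact hz⟩
    have hEbound : ∀ N : ℕ, (N : ℝ) * μ (C : Set X) ≤ μ (E N) := by
      intro N
      induction N with
      | zero => simpa using hμ0 (E 0)
      | succ N ih =>
          have key := hadd (C : Set X) (Φ ⁻¹' (E N))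
          have hEN : μ (Φ ⁻¹' (E N)) = μ (E N) := hshift _
          have hint : μ ((C : Set X) ∩ Φ ⁻¹' (E N)) = 0 := by
            have hEq : (C : Set X) ∩ Φ ⁻¹' (E N)
                = ⋃ i ∈ Finset.range N, ((C : Set X) ∩ Φ^[i+1] ⁻¹' (C : Set X)) := by
              ext z
              simp only [hEdef, Set.mem_inter_iff, Set.mem_preimage, Set.mem_iUnion,
                Finset.mem_range, exists_prop, Function.iterate_succ_apply]
              tauto
            rw [hEq]
            have hle2 := hsubN (fun i => (C : Set X) ∩ Φ^[i+1] ⁻¹' (C : Set X)) N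
            have hsum : ∑ i ∈ Finset.range N, μ ((C : Set X) ∩ Φ^[i+1] ⁻¹' (C : Set X)) = 0 := by
              apply Finset.sum_eq_zero
              intro i _
              exact hzero (i+1) (by omega)
            rw [hsum] at hle2
            exact le_antisymm hle2 (hμ0 _)
          have hlow : μ (C : Set X) + μ (E N) ≤ μ (E (N+1)) := by
            rw [hEs N]
            linarith [key, hEN, hint]
          push_cast
          linarith
    obtain ⟨N, hN⟩ := exists_nat_gt (1 / μ (C : Set X))
    have h1N : 1 < (N : ℝ) * μ (C : Set X) := by
      rw [div_lt_iff₀ hCμ] at hN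
      linarith
    linarith [hEbound N, hμ1 (E N)]
  obtain ⟨d, hd, hDμ⟩ := hrec
  set D : TopologicalSpace.Closeds X :=
    ⟨(C : Set X) ∩ Φ^[d] ⁻¹' (C : Set X),
      C.isClosed.inter (C.isClosed.preimage (hΦ.iterate d))⟩ with hDdef
  have hD𝒮 : D ∈ 𝒮 := ⟨(Set.inter_subset_left).trans hCY, hDμ⟩
  have hDle : D ≤ C := by
    rw [← SetLike.coe_subset_coe]
    exact Set.inter_subset_left
  have hDC : D = C := by
    by_contra hne'
    exact hCmin D hD𝒮 (lt_of_le_of_ne hDle hne')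
  have hsub : ∀ z ∈ (C : Set X), Φ^[d] z ∈ (C : Set X) := by
    intro z hz
    have : z ∈ (D : Set X) := by rw [hDC]; exact hz
    exact this.2
  obtain ⟨a, ha⟩ := hvisit (C : Set X) hCμ
  have hiter : ∀ (n : ℕ) (z : X), z ∈ (C : Set X) → Φ^[n*d] z ∈ (C : Set X) := by
    intro n
    induction n with
    | zero => intro z hz; simpa using hz
    | succ n ih =>
        intro z hz
        have h1' : Φ^[d] z ∈ (C : Set X) := hsub z hz
        have h2' := ih (Φ^[d] z) h1'
        have : (n+1)*d = n*d + d := by ring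
        rw [this, Function.iterate_add_apply]
        exact h2'
  refine ⟨a, d, hd, ?_⟩
  rintro m ⟨n, rfl⟩
  show Φ^[a + n * d] x ∈ Y
  have hm : a + n * d = n * d + a := by ring
  rw [hm, Function.iterate_add_apply]
  exact hCY (hiter n (Φ^[a] x) ha)
end

section
/- Let X be a Noetherian topological space, let U ⊆ X be an open subset, and let Φ : U → X be a continuous map. Let x ∈ X be such that the n-th iterate Φⁿ(x) is defined and lies in U for every nonnegative integer n. Then for each closed subset Y ⊆ X, the set S = { n ∈ ℕ : Φⁿ(x) ∈ Y } is a union of at most finitely many arithmetic progressions together with a set of Banach density zero. -/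
open Filter Topology Set


namespace BDaux

noncomputable def bdF (S : Set ℕ) (n : ℕ) : ℝ :=
  ⨆ a : ℕ, ((S ∩ Set.Ico a (a + n)).ncard : ℝ) / n

lemma banachDensity_eq (S : Set ℕ) : banachDensity S = limsup (bdF S) atTop := rfl

lemma ncard_Ico (a n : ℕ) : (Set.Ico a (a + n)).ncard = n := by
  rw [Set.ncard_eq_toFinset_card']; simp

lemma term_nonneg (S : Set ℕ) (n a : ℕ) : 0 ≤ ((S ∩ Set.Ico a (a + n)).ncard : ℝ) / n := by
  positivity

lemma term_le_one (S : Set ℕ) (n a : ℕ) : ((S ∩ Set.Ico a (a + n)).ncard : ℝ) / n ≤ 1 := by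
  rcases Nat.eq_zero_or_pos n with h | h
  · subst h; simp
  · rw [div_le_one (by exact_mod_cast h)]
    exact_mod_cast (Set.ncard_le_ncard (Set.inter_subset_right) (Set.finite_Ico _ _)).trans
      (le_of_eq (ncard_Ico a n))

lemma bdd (S : Set ℕ) (n : ℕ) :
    BddAbove (Set.range fun a : ℕ => ((S ∩ Set.Ico a (a + n)).ncard : ℝ) / n) :=
  ⟨1, by rintro y ⟨a, rfl⟩; exact term_le_one S n a⟩

lemma bdF_nonneg (S : Set ℕ) (n : ℕ) : 0 ≤ bdF S n :=
  le_trans (term_nonneg S n 0) (le_ciSup (bdd S n) 0)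

lemma bdF_le_one (S : Set ℕ) (n : ℕ) : bdF S n ≤ 1 := ciSup_le (term_le_one S n)

lemma isBounded (S : Set ℕ) : IsBoundedUnder (· ≤ ·) atTop (bdF S) :=
  isBoundedUnder_of ⟨1, fun n => bdF_le_one S n⟩

lemma isCobounded (S : Set ℕ) : IsCoboundedUnder (· ≤ ·) atTop (bdF S) :=
  (isBoundedUnder_of ⟨0, fun n => bdF_nonneg S n⟩ :
    IsBoundedUnder (· ≥ ·) atTop (bdF S)).isCoboundedUnder_le

lemma banachDensity_le_of_pointwise {A B : Set ℕ} (h : ∀ n, bdF A n ≤ bdF B n) :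
    banachDensity A ≤ banachDensity B :=
  limsup_le_limsup (Eventually.of_forall h) (isCobounded A) (isBounded B)

lemma bdF_mono {A B : Set ℕ} (h : A ⊆ B) (n : ℕ) : bdF A n ≤ bdF B n := by
  refine ciSup_le fun a => le_trans ?_ (le_ciSup (bdd B n) a)
  have hcard : ((A ∩ Set.Ico a (a + n)).ncard : ℝ) ≤ ((B ∩ Set.Ico a (a + n)).ncard : ℝ) := by
    exact_mod_cast Set.ncard_le_ncard (Set.inter_subset_inter_left _ h)
      ((Set.finite_Ico _ _).inter_of_right _)
  exact div_le_div_of_nonneg_right hcard (by positivity) |>.trans_eq rfl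

lemma banachDensity_mono {A B : Set ℕ} (h : A ⊆ B) : banachDensity A ≤ banachDensity B :=
  banachDensity_le_of_pointwise (bdF_mono h)

lemma banachDensity_nonneg (S : Set ℕ) : 0 ≤ banachDensity S := by
  have : (0 : ℝ) = limsup (fun _ : ℕ => (0:ℝ)) atTop := (limsup_const 0).symm
  rw [this, banachDensity_eq]
  exact limsup_le_limsup (Eventually.of_forall fun n => bdF_nonneg S n)
    (isCoboundedUnder_le_of_le atTop (fun _ => le_rfl)) (isBounded S)

lemma banachDensity_zero_of_subset {A B : Set ℕ} (h : A ⊆ B) (hB : banachDensity B = 0) :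
    banachDensity A = 0 :=
  le_antisymm (hB ▸ banachDensity_mono h) (banachDensity_nonneg A)

lemma bdF_union_le (A B : Set ℕ) (n : ℕ) : bdF (A ∪ B) n ≤ bdF A n + bdF B n := by
  refine ciSup_le fun a => ?_
  have hcount : (((A ∪ B) ∩ Set.Ico a (a + n)).ncard : ℝ)
      ≤ ((A ∩ Set.Ico a (a + n)).ncard : ℝ) + ((B ∩ Set.Ico a (a + n)).ncard : ℝ) := by
    rw [Set.union_inter_distrib_right]
    exact_mod_cast Set.ncard_union_le _ _
  calc (((A ∪ B) ∩ Set.Ico a (a + n)).ncard : ℝ) / n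
      ≤ (((A ∩ Set.Ico a (a + n)).ncard : ℝ) + ((B ∩ Set.Ico a (a + n)).ncard : ℝ)) / n := by
        apply div_le_div_of_nonneg_right hcount (by positivity) |>.trans_eq rfl
    _ = ((A ∩ Set.Ico a (a + n)).ncard : ℝ) / n + ((B ∩ Set.Ico a (a + n)).ncard : ℝ) / n := by
        ring
    _ ≤ bdF A n + bdF B n := add_le_add (le_ciSup (bdd A n) a) (le_ciSup (bdd B n) a)

lemma banachDensity_union_le (A B : Set ℕ) :
    banachDensity (A ∪ B) ≤ banachDensity A + banachDensity B := by
  rw [banachDensity_eq]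
  refine le_of_forall_pos_le_add fun ε hε => ?_
  have hA : ∀ᶠ n in atTop, bdF A n < banachDensity A + ε / 2 := by
    apply eventually_lt_of_limsup_lt _ (isBounded A)
    rw [← banachDensity_eq]; linarith
  have hB : ∀ᶠ n in atTop, bdF B n < banachDensity B + ε / 2 := by
    apply eventually_lt_of_limsup_lt _ (isBounded B)
    rw [← banachDensity_eq]; linarith
  have h := hA.and hB
  refine limsup_le_of_le (isCobounded _) ?_
  filter_upwards [h] with n ⟨h1, h2⟩
  have := bdF_union_le A B n
  linarith

lemma banachDensity_empty : banachDensity (∅ : Set ℕ) = 0 := by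
  rw [banachDensity_eq]
  have : bdF (∅ : Set ℕ) = fun _ => (0:ℝ) := by
    funext n; unfold bdF; simp
  rw [this, limsup_const]

lemma banachDensity_biUnion_le (s : Finset ℕ) (A : ℕ → Set ℕ) :
    banachDensity (⋃ i ∈ s, A i) ≤ ∑ i ∈ s, banachDensity (A i) := by
  classical
  induction s using Finset.induction with
  | empty => simp [banachDensity_empty]
  | insert _ _ hni ih =>
    rename_i i t
    rw [Finset.set_biUnion_insert, Finset.sum_insert hni]
    exact (banachDensity_union_le _ _).trans (by linarith)

lemma spaced_ncard {G : Set ℕ} {D : ℕ}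
    (hG : ∀ m ∈ G, ∀ m' ∈ G, m < m' → m + D < m') (a n : ℕ) :
    (G ∩ Set.Ico a (a + n)).ncard ≤ n / (D + 1) + 1 := by
  have hinj : Set.InjOn (fun g => (g - a) / (D + 1)) (G ∩ Set.Ico a (a + n)) := by
    intro g₁ h₁ g₂ h₂ heq
    by_contra hne
    wlog hlt : g₁ < g₂ generalizing g₁ g₂
    · exact this h₂ h₁ heq.symm (Ne.symm hne) (by omega)
    have hgap := hG g₁ h₁.1 g₂ h₂.1 hlt
    have ha₁ : a ≤ g₁ := h₁.2.1
    have : (g₁ - a) / (D + 1) < (g₂ - a) / (D + 1) := by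
      have h2 : g₁ - a + (D + 1) ≤ g₂ - a := by omega
      calc (g₁ - a) / (D + 1) < (g₁ - a) / (D + 1) + 1 := Nat.lt_succ_self _
        _ = (g₁ - a + (D + 1)) / (D + 1) := (Nat.add_div_right _ (by omega)).symm
        _ ≤ (g₂ - a) / (D + 1) := Nat.div_le_div_right h2
    exact this.ne heq
  calc (G ∩ Set.Ico a (a + n)).ncard
      = ((fun g => (g - a) / (D + 1)) '' (G ∩ Set.Ico a (a + n))).ncard :=
        (Set.ncard_image_of_injOn hinj).symm
    _ ≤ (Set.Ico 0 (n / (D + 1) + 1)).ncard := by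
        apply Set.ncard_le_ncard _ (Set.finite_Ico _ _)
        rintro y ⟨g, ⟨hg, hga, hgn⟩, rfl⟩
        simp only [Set.mem_Ico]
        refine ⟨Nat.zero_le _, ?_⟩
        have : g - a ≤ n := by omega
        have := Nat.div_le_div_right (c := D + 1) this
        omega
    _ ≤ n / (D + 1) + 1 := by rw [Set.ncard_eq_toFinset_card']; simp


lemma banachDensity_spaced_le {G : Set ℕ} {D : ℕ}
    (hG : ∀ m ∈ G, ∀ m' ∈ G, m < m' → m + D < m') :
    banachDensity G ≤ 1 / ((D : ℝ) + 1) := by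
  rw [banachDensity_eq]
  have hlim : Tendsto (fun n : ℕ => 1 / ((D:ℝ) + 1) + 1 / n) atTop (𝓝 (1 / ((D:ℝ) + 1))) := by
    have h0 : Tendsto (fun n : ℕ => 1 / (n:ℝ)) atTop (𝓝 0) :=
      tendsto_one_div_atTop_nhds_zero_nat
    simpa using (tendsto_const_nhds.add h0)
  have heq := hlim.limsup_eq
  rw [← heq]
  refine limsup_le_limsup ?_ (isCobounded G) (isBoundedUnder_of ⟨1 / ((D:ℝ)+1) + 1, ?_⟩)
  · filter_upwards [eventually_ge_atTop 1] with n hn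
    have hn' : (0:ℝ) < n := by exact_mod_cast hn
    refine ciSup_le fun a => ?_
    have hcount := spaced_ncard hG a n
    have hcast : ((G ∩ Set.Ico a (a + n)).ncard : ℝ) ≤ ((n / (D + 1) : ℕ) : ℝ) + 1 := by
      exact_mod_cast hcount
    have hdiv : ((n / (D + 1) : ℕ) : ℝ) ≤ (n : ℝ) / ((D:ℝ) + 1) := by
      have := Nat.cast_div_le (m := n) (n := D + 1) (α := ℝ)
      simpa using this
    calc ((G ∩ Set.Ico a (a + n)).ncard : ℝ) / n ≤ ((n:ℝ) / ((D:ℝ)+1) + 1) / n := by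
          apply div_le_div_of_nonneg_right _ (by positivity) |>.trans_eq rfl
          linarith
      _ = 1 / ((D:ℝ) + 1) + 1 / n := by field_simp
  · intro n
    have h1 : (1:ℝ) / ((n:ℝ)) ≤ 1 := by
      rcases Nat.eq_zero_or_pos n with h | h
      · subst h; simp
      · rw [div_le_one (by exact_mod_cast h)]; exact_mod_cast h
    have h1' : (0:ℝ) < (D:ℝ) + 1 := by positivity
    nlinarith [one_div_pos.mpr h1']

lemma banachDensity_pos_of_ne {T : Set ℕ} (h : banachDensity T ≠ 0) : 0 < banachDensity T :=
  lt_of_le_of_ne (banachDensity_nonneg T) (Ne.symm h)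

lemma exists_gap {T : Set ℕ} (hT : 0 < banachDensity T) :
    ∃ e : ℕ, 1 ≤ e ∧ 0 < banachDensity {n | n ∈ T ∧ n + e ∈ T} := by
  obtain ⟨D, hD⟩ := exists_nat_one_div_lt hT
  by_contra hcon
  push_neg at hcon
  have hzero : ∀ e, 1 ≤ e → banachDensity {n | n ∈ T ∧ n + e ∈ T} = 0 := fun e he =>
    le_antisymm (hcon e he) (banachDensity_nonneg _)
  set G : Set ℕ := {n | n ∈ T ∧ ∀ e, 1 ≤ e → e ≤ D → n + e ∉ T} with hGdef
  have hGspaced : ∀ m ∈ G, ∀ m' ∈ G, m < m' → m + D < m' := by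
    intro m hm m' hm' hlt
    by_contra hle
    exact hm.2 (m' - m) (by omega) (by omega) (by
      have : m + (m' - m) = m' := by omega
      rw [this]; exact hm'.1)
  have hcover : T ⊆ G ∪ ⋃ e ∈ Finset.Icc 1 D, {n | n ∈ T ∧ n + e ∈ T} := by
    intro n hn
    by_cases hg : ∀ e, 1 ≤ e → e ≤ D → n + e ∉ T
    · exact Or.inl ⟨hn, hg⟩
    · push_neg at hg
      obtain ⟨e, he1, heD, heT⟩ := hg
      exact Or.inr (Set.mem_biUnion (Finset.mem_Icc.mpr ⟨he1, heD⟩) ⟨hn, heT⟩)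
  have hbound : banachDensity T ≤ 1 / ((D:ℝ) + 1) := by
    calc banachDensity T ≤ banachDensity (G ∪ ⋃ e ∈ Finset.Icc 1 D, {n | n ∈ T ∧ n + e ∈ T}) :=
          banachDensity_mono hcover
      _ ≤ banachDensity G + banachDensity (⋃ e ∈ Finset.Icc 1 D, {n | n ∈ T ∧ n + e ∈ T}) :=
          banachDensity_union_le _ _
      _ ≤ 1 / ((D:ℝ)+1) + ∑ e ∈ Finset.Icc 1 D, banachDensity {n | n ∈ T ∧ n + e ∈ T} := by
          exact add_le_add (banachDensity_spaced_le hGspaced) (banachDensity_biUnion_le _ _)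
      _ = 1 / ((D:ℝ)+1) := by
          rw [Finset.sum_congr rfl fun e he => hzero e (Finset.mem_Icc.mp he).1]
          simp
  linarith

lemma banachDensity_shift_ge (A : Set ℕ) (e : ℕ) :
    banachDensity A ≤ banachDensity ((fun n => n + e) '' A) := by
  apply banachDensity_le_of_pointwise
  intro n
  refine ciSup_le fun a => le_trans ?_ (le_ciSup (bdd _ n) (a + e))
  have himg : (fun m => m + e) '' (A ∩ Set.Ico a (a + n))
      = ((fun n => n + e) '' A) ∩ Set.Ico (a + e) (a + e + n) := by
    ext m
    simp only [Set.mem_image, Set.mem_inter_iff, Set.mem_Ico]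
    constructor
    · rintro ⟨g, ⟨hgA, hga, hgn⟩, rfl⟩
      exact ⟨⟨g, hgA, rfl⟩, by omega, by omega⟩
    · rintro ⟨⟨g, hgA, rfl⟩, h1, h2⟩
      exact ⟨g, ⟨hgA, by omega, by omega⟩, rfl⟩
  have hcard : (A ∩ Set.Ico a (a + n)).ncard
      = (((fun n => n + e) '' A) ∩ Set.Ico (a + e) (a + e + n)).ncard := by
    rw [← himg, Set.ncard_image_of_injOn]
    exact fun p _ q _ h => by omega
  rw [hcard]

lemma banachDensity_affine_le (R : Set ℕ) (b d : ℕ) (hd : 1 ≤ d) :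
    banachDensity ((fun k => b + d * k) '' R) ≤ banachDensity R := by
  apply banachDensity_le_of_pointwise
  intro n
  refine ciSup_le fun a => ?_
  set img := (fun k => b + d * k) '' R with himgdef
  set K : Set ℕ := {k | k ∈ R ∧ b + d * k ∈ Set.Ico a (a + n)} with hKdef
  have himg : img ∩ Set.Ico a (a + n) = (fun k => b + d * k) '' K := by
    ext m
    constructor
    · rintro ⟨⟨k, hk, rfl⟩, hm⟩
      exact ⟨k, ⟨hk, hm⟩, rfl⟩
    · rintro ⟨k, ⟨hk, hm⟩, rfl⟩
      exact ⟨⟨k, hk, rfl⟩, hm⟩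
  rcases Set.eq_empty_or_nonempty K with hKe | hKne
  · have : img ∩ Set.Ico a (a + n) = ∅ := by rw [himg, hKe]; simp
    rw [this]
    simpa using bdF_nonneg R n
  · set k₀ := sInf K with hk0
    have hk0K : k₀ ∈ K := Nat.sInf_mem hKne
    have hKsub : K ⊆ R ∩ Set.Ico k₀ (k₀ + n) := by
      intro k hk
      refine ⟨hk.1, Nat.sInf_le hk, ?_⟩
      have h1 := hk.2.2
      have h2 := hk0K.2.1
      have hge : k₀ ≤ k := Nat.sInf_le hk
      have e1 : d * (k - k₀) + d * k₀ = d * k := by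
        rw [← Nat.mul_add]; congr 1; omega
      have e2 : k - k₀ ≤ d * (k - k₀) := Nat.le_mul_of_pos_left _ (by omega)
      omega
    have hcard : (img ∩ Set.Ico a (a + n)).ncard ≤ (R ∩ Set.Ico k₀ (k₀ + n)).ncard := by
      rw [himg, Set.ncard_image_of_injOn (fun p _ q _ h => by
        have h' : b + d * p = b + d * q := h
        exact Nat.eq_of_mul_eq_mul_left (show 0 < d by omega) (by omega))]
      exact Set.ncard_le_ncard hKsub ((Set.finite_Ico _ _).inter_of_right _)
    refine le_trans ?_ (le_ciSup (bdd R n) k₀)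
    apply div_le_div_of_nonneg_right _ (by positivity) |>.trans_eq rfl
    exact_mod_cast hcard

end BDaux

open TopologicalSpace

namespace NDyn
variable {X : Type*} [TopologicalSpace X]

lemma exists_min_closed [NoetherianSpace X] (F : Set (Set X)) (hne : F.Nonempty)
    (hcl : ∀ s ∈ F, IsClosed s) :
    ∃ V ∈ F, ∀ W ∈ F, W ⊆ V → W = V := by
  obtain ⟨s0, hs0⟩ := hne
  set F' : Set (Closeds X) := {c | (c : Set X) ∈ F} with hF'
  obtain ⟨V, hV, hmin⟩ := (wellFounded_lt (α := Closeds X)).has_min F'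
    ⟨⟨s0, hcl s0 hs0⟩, hs0⟩
  refine ⟨(V : Set X), hV, fun W hW hsub => ?_⟩
  have hnlt := hmin ⟨W, hcl W hW⟩ hW
  by_contra hne'
  exact hnlt (lt_of_le_of_ne (by exact_mod_cast hsub) (by
    intro h; exact hne' (congrArg SetLike.coe h)))

lemma antitone_stabilizes [NoetherianSpace X] (C : ℕ → Set X)
    (hcl : ∀ n, IsClosed (C n)) (hanti : ∀ m n, m ≤ n → C n ⊆ C m) :
    ∃ K₀, ∀ K, K₀ ≤ K → C K = C K₀ := by
  obtain ⟨V, ⟨K₀, rfl⟩, hmin⟩ := exists_min_closed (Set.range C) ⟨C 0, 0, rfl⟩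
    (by rintro s ⟨n, rfl⟩; exact hcl n)
  exact ⟨K₀, fun K hK => hmin (C K) ⟨K, rfl⟩ (hanti _ _ hK)⟩

lemma preirr_union_closed {s A B : Set X} (hs : IsPreirreducible s)
    (hA : IsClosed A) (hB : IsClosed B) (hsub : s ⊆ A ∪ B) : s ⊆ A ∨ s ⊆ B := by
  by_contra h
  push_neg at h
  obtain ⟨⟨a, haS, haA⟩, ⟨b, hbS, hbB⟩⟩ :
      (∃ a ∈ s, a ∉ A) ∧ (∃ b ∈ s, b ∉ B) := by
    constructor
    · rcases Set.not_subset.mp h.1 with ⟨a, h1, h2⟩; exact ⟨a, h1, h2⟩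
    · rcases Set.not_subset.mp h.2 with ⟨b, h1, h2⟩; exact ⟨b, h1, h2⟩
  obtain ⟨y, hy⟩ := hs Aᶜ Bᶜ hA.isOpen_compl hB.isOpen_compl ⟨a, haS, haA⟩ ⟨b, hbS, hbB⟩
  rcases hsub hy.1 with h' | h'
  · exact hy.2.1 h'
  · exact hy.2.2 h'

lemma irred_subset_finset_union {s : Set X} (hs : IsIrreducible s) (t : Finset (Set X))
    (hcl : ∀ u ∈ t, IsClosed u) (hsub : s ⊆ ⋃ u ∈ t, u) : ∃ u ∈ t, s ⊆ u := by
  classical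
  induction t using Finset.induction with
  | empty =>
    simp only [Finset.notMem_empty, Set.iUnion_of_empty, Set.iUnion_empty] at hsub
    exact absurd (hsub hs.nonempty.choose_spec) (Set.notMem_empty _)
  | insert _ _ hni ih =>
    rename_i u t'
    rw [Finset.set_biUnion_insert] at hsub
    rcases preirr_union_closed hs.2 (hcl u (Finset.mem_insert_self u t'))
      (Set.Finite.isClosed_biUnion (Finset.finite_toSet t')
        (fun v hv => hcl v (Finset.mem_insert_of_mem hv))) hsub with h | h
    · exact ⟨u, Finset.mem_insert_self u t', h⟩
    · obtain ⟨v, hv, hsv⟩ := ih (fun v hv => hcl v (Finset.mem_insert_of_mem hv)) h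
      exact ⟨v, Finset.mem_insert_of_mem hv, hsv⟩

lemma closure_finset_biUnion (t : Finset (Set X)) (f : Set X → Set X) :
    closure (⋃ u ∈ t, f u) = ⋃ u ∈ t, closure (f u) := by
  classical
  induction t using Finset.induction with
  | empty => simp
  | insert _ _ hni ih =>
    rename_i u t'
    rw [Finset.set_biUnion_insert, closure_union, ih, Finset.set_biUnion_insert]

lemma irred_inter_open {s u : Set X} (hs : IsIrreducible s) (hu : IsOpen u)
    (hne : (s ∩ u).Nonempty) : IsIrreducible (s ∩ u) := by
  refine ⟨hne, fun v w hv hw h1 h2 => ?_⟩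
  obtain ⟨y, hy⟩ := hs.2 (u ∩ v) (u ∩ w) (hu.inter hv) (hu.inter hw)
    (by obtain ⟨z, ⟨hz1, hz2⟩, hz3⟩ := h1; exact ⟨z, hz1, hz2, hz3⟩)
    (by obtain ⟨z, ⟨hz1, hz2⟩, hz3⟩ := h2; exact ⟨z, hz1, hz2, hz3⟩)
  exact ⟨y, ⟨hy.1, hy.2.1.1⟩, hy.2.1.2, hy.2.2.2⟩


lemma irred_subset_finset_biUnion {ι : Type*} {s : Set X} (hs : IsIrreducible s)
    (t : Finset ι) (g : ι → Set X) (hcl : ∀ i ∈ t, IsClosed (g i))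
    (hsub : s ⊆ ⋃ i ∈ t, g i) : ∃ i ∈ t, s ⊆ g i := by
  classical
  induction t using Finset.induction with
  | empty =>
    simp only [Finset.notMem_empty, Set.iUnion_of_empty, Set.iUnion_empty] at hsub
    exact absurd (hsub hs.nonempty.choose_spec) (Set.notMem_empty _)
  | insert _ _ hni ih =>
    rename_i u t'
    rw [Finset.set_biUnion_insert] at hsub
    rcases preirr_union_closed hs.2 (hcl u (Finset.mem_insert_self u t'))
      (Set.Finite.isClosed_biUnion (Finset.finite_toSet t')
        (fun v hv => hcl v (Finset.mem_insert_of_mem hv))) hsub with h | h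
    · exact ⟨u, Finset.mem_insert_self u t', h⟩
    · obtain ⟨v, hv, hsv⟩ := ih (fun v hv => hcl v (Finset.mem_insert_of_mem hv)) h
      exact ⟨v, Finset.mem_insert_of_mem hv, hsv⟩

lemma closure_finset_biUnion' {ι : Type*} (t : Finset ι) (g : ι → Set X) :
    closure (⋃ i ∈ t, g i) = ⋃ i ∈ t, closure (g i) := by
  classical
  induction t using Finset.induction with
  | empty => simp
  | insert _ _ hni ih =>
    rename_i u t'
    rw [Finset.set_biUnion_insert, closure_union, ih, Finset.set_biUnion_insert]

lemma exists_comps [NoetherianSpace X] {Ω : Set X} (hΩ : IsClosed Ω) :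
    ∃ t : Finset (Set X), (∀ s ∈ t, IsIrreducible s) ∧ (∀ s ∈ t, IsClosed s) ∧
      (⋃ s ∈ t, s) = Ω ∧ ∀ s ∈ t, ¬ s ⊆ ⋃ u ∈ (↑t : Set (Set X)) \ {s}, u := by
  classical
  obtain ⟨S, hSirr, hSsup⟩ := NoetherianSpace.exists_finset_irreducible (⟨Ω, hΩ⟩ : Closeds X)
  have hsupco : ∀ (T : Finset (Closeds X)), ((T.sup id : Closeds X) : Set X) = ⋃ c ∈ T, (c : Set X) := by
    intro T
    induction T using Finset.induction with
    | empty => simp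
    | insert _ _ hni ih =>
      rename_i a s
      rw [Finset.sup_insert, Finset.set_biUnion_insert, ← ih]
      simp
  set P : Finset (Set X) → Prop := fun t =>
    (∀ s ∈ t, IsIrreducible s) ∧ (∀ s ∈ t, IsClosed s) ∧ (⋃ s ∈ t, s) = Ω with hP
  have hex : ∃ n, ∃ t, P t ∧ t.card = n := by
    refine ⟨_, Finset.image (fun c : Closeds X => (c : Set X)) S, ⟨?_, ?_, ?_⟩, rfl⟩
    · intro s hs
      obtain ⟨c, hc, rfl⟩ := Finset.mem_image.mp hs
      exact hSirr ⟨c, hc⟩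
    · intro s hs
      obtain ⟨c, hc, rfl⟩ := Finset.mem_image.mp hs
      exact c.isClosed
    · have h1 : ((S.sup id : Closeds X) : Set X) = Ω := by rw [← hSsup]; rfl
      rw [← h1, hsupco]
      apply subset_antisymm
      · intro y hy
        simp only [Set.mem_iUnion] at hy ⊢
        obtain ⟨s, hs, hys⟩ := hy
        obtain ⟨c, hc, rfl⟩ := Finset.mem_image.mp hs
        exact ⟨c, hc, hys⟩
      · intro y hy
        simp only [Set.mem_iUnion] at hy ⊢
        obtain ⟨c, hc, hyc⟩ := hy
        exact ⟨(c : Set X), Finset.mem_image.mpr ⟨c, hc, rfl⟩, hyc⟩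
  obtain ⟨n, hn⟩ := hex
  have hfind : ∃ n, ∃ t, P t ∧ t.card = n := ⟨n, hn⟩
  set n₀ := Nat.find hfind with hn₀
  obtain ⟨t, hPt, hcard⟩ := Nat.find_spec hfind
  refine ⟨t, hPt.1, hPt.2.1, hPt.2.2, ?_⟩
  intro s hs hsub
  have hPe : P (t.erase s) := by
    refine ⟨fun u hu => hPt.1 u (Finset.mem_of_mem_erase hu),
           fun u hu => hPt.2.1 u (Finset.mem_of_mem_erase hu), ?_⟩
    apply subset_antisymm
    · rw [← hPt.2.2]
      exact Set.iUnion₂_mono' fun u hu => ⟨u, Finset.mem_of_mem_erase hu, subset_rfl⟩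
    · rw [← hPt.2.2]
      intro y hy
      simp only [Set.mem_iUnion] at hy ⊢
      obtain ⟨u, hu, hyu⟩ := hy
      by_cases hus : u = s
      · subst hus
        have h2 := hsub hyu
        simp only [Set.mem_iUnion, Set.mem_diff, Set.mem_singleton_iff, Finset.mem_coe] at h2
        obtain ⟨v, ⟨hv1, hv2⟩, hv3⟩ := h2
        exact ⟨v, Finset.mem_erase.mpr ⟨hv2, hv1⟩, hv3⟩
      · exact ⟨u, Finset.mem_erase.mpr ⟨hus, hu⟩, hyu⟩
  have hlt : (t.erase s).card < t.card := Finset.card_erase_lt_of_mem hs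
  exact Nat.find_min hfind (hcard ▸ hlt) ⟨t.erase s, hPe, rfl⟩

lemma cong_extract {ρ n₁ t n K : ℕ} (hρ : 0 < ρ) (ht : n₁ ≤ t) (hn : t + ρ * K ≤ n)
    (hcong : (n - n₁) % ρ = (t - n₁) % ρ) : ∃ k, K ≤ k ∧ n = t + ρ * k := by
  set q1 := (n - n₁) / ρ with hq1
  set q2 := (t - n₁) / ρ with hq2
  have h1 : ρ * q1 + (n - n₁) % ρ = n - n₁ := Nat.div_add_mod _ _
  have h2 : ρ * q2 + (t - n₁) % ρ = t - n₁ := Nat.div_add_mod _ _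
  rw [hcong] at h1
  have hq : q2 ≤ q1 := by
    have hle : ρ * q2 ≤ ρ * q1 := by omega
    exact Nat.le_of_mul_le_mul_left hle hρ
  have h3 : ρ * (q1 - q2) + ρ * q2 = ρ * q1 := by
    rw [← Nat.mul_add]; congr 1; omega
  refine ⟨q1 - q2, ?_, ?_⟩
  · have h4 : ρ * K ≤ ρ * (q1 - q2) := by omega
    exact Nat.le_of_mul_le_mul_left h4 hρ
  · omega

section Dyn
variable {Φ : X → X} {U : Set X}

def Udom (Φ : X → X) (U : Set X) (d : ℕ) : Set X := {y | ∀ k < d, Φ^[k] y ∈ U}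

lemma udom_spec (hU : IsOpen U) (hΦ : ContinuousOn Φ U) (d : ℕ) :
    IsOpen (Udom Φ U d) ∧ ContinuousOn (Φ^[d]) (Udom Φ U d) := by
  induction d with
  | zero =>
    have h0 : Udom Φ U 0 = Set.univ := by ext y; simp [Udom]
    constructor
    · rw [h0]; exact isOpen_univ
    · rw [h0]
      simpa [Function.iterate_zero] using continuousOn_id (s := (Set.univ : Set X))
  | succ d ih =>
    have hset : Udom Φ U (d+1) = Udom Φ U d ∩ (Φ^[d]) ⁻¹' U := by
      ext y
      simp only [Udom, Set.mem_setOf_eq, Set.mem_inter_iff, Set.mem_preimage]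
      constructor
      · exact fun h => ⟨fun k hk => h k (by omega), h d (by omega)⟩
      · rintro ⟨h1, h2⟩ k hk
        rcases Nat.lt_succ_iff_lt_or_eq.mp hk with h | h
        · exact h1 k h
        · subst h; exact h2
    constructor
    · rw [hset]; exact ih.2.isOpen_inter_preimage ih.1 hU
    · rw [hset]
      have hit : Φ^[d+1] = Φ ∘ Φ^[d] := Function.iterate_succ' Φ d
      rw [hit]
      exact hΦ.comp (ih.2.mono Set.inter_subset_left) (fun y hy => hy.2)

lemma mapsTo_closure (hU : IsOpen U) (hΦ : ContinuousOn Φ U) (d : ℕ) {A B : Set X}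
    (hB : IsClosed B) (hA : A ⊆ Udom Φ U d) (hAB : Φ^[d] '' A ⊆ B) :
    ∀ y ∈ closure A ∩ Udom Φ U d, Φ^[d] y ∈ B := by
  intro y hy
  have hcw : ContinuousWithinAt (Φ^[d]) A y :=
    (((udom_spec hU hΦ d).2) y hy.2).mono hA
  exact closure_minimal hAB hB (hcw.mem_closure_image hy.1)

end Dyn
end NDyn

open Filter Topology Set TopologicalSpace NDyn BDaux in
theorem stmt_8 {X : Type*} [TopologicalSpace X] [TopologicalSpace.NoetherianSpace X]
    (U : Set X) (hU : IsOpen U) (Φ : X → X) (hΦ : ContinuousOn Φ U)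
    (x : X) (hx : ∀ n : ℕ, Φ^[n] x ∈ U) (Y : Set X) (hY : IsClosed Y) :
    ∃ (F : Finset (ℕ × ℕ)) (Z : Set ℕ), banachDensity Z = 0 ∧
      {n : ℕ | Φ^[n] x ∈ Y} =
        (⋃ p ∈ F, {m : ℕ | ∃ n : ℕ, m = p.1 + n * p.2}) ∪ Z := by
  classical
  set orb : ℕ → X := fun n => Φ^[n] x with horbdef
  have horb : ∀ k n : ℕ, Φ^[k] (orb n) = orb (k + n) := fun k n =>
    (Function.iterate_add_apply Φ k n x).symm
  have horbU : ∀ n, orb n ∈ U := hx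
  have horbdom : ∀ n d, orb n ∈ Udom Φ U d := by
    intro n d k _
    rw [horb]; exact hx _
  set S : Set ℕ := {n | orb n ∈ Y} with hSdef
  -- Step 1 : stabilized tail closure Ω
  set CT : ℕ → Set X := fun K => closure (orb '' Set.Ici K) with hCT
  have hCTcl : ∀ K, IsClosed (CT K) := fun _ => isClosed_closure
  have hCTanti : ∀ m n : ℕ, m ≤ n → CT n ⊆ CT m := fun m n h =>
    closure_mono (Set.image_mono (Set.Ici_subset_Ici.mpr h))
  obtain ⟨M, hM⟩ := antitone_stabilizes CT hCTcl hCTanti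
  set Ω : Set X := CT M with hΩdef
  have hΩcl : IsClosed Ω := hCTcl M
  have horbΩ : ∀ n, M ≤ n → orb n ∈ Ω := by
    intro n hn
    have h1 : orb n ∈ CT n := subset_closure ⟨n, le_refl n, rfl⟩
    rw [hM n hn] at h1; exact h1
  have hdense : ∀ K, M ≤ K → closure (orb '' Set.Ici K) = Ω := fun K hK => hM K hK
  -- Step 2 : irreducible components of Ω
  obtain ⟨comps, hcIrr, hcCl, hcUnion, hcIrred⟩ := exists_comps hΩcl
  -- tails of orbit inside a component are dense in it
  have hcomp_dense : ∀ s ∈ comps, ∀ K, M ≤ K →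
      closure (orb '' {n | K ≤ n ∧ orb n ∈ s}) = s := by
    intro s hs K hK
    have hsplit : orb '' Set.Ici K ⊆ ⋃ u ∈ comps, orb '' {n | K ≤ n ∧ orb n ∈ u} := by
      rintro y ⟨n, hn, rfl⟩
      have h1 : orb n ∈ Ω := horbΩ n (le_trans hK hn)
      rw [← hcUnion] at h1
      simp only [Set.mem_iUnion] at h1 ⊢
      obtain ⟨u, hu, hyu⟩ := h1
      exact ⟨u, hu, n, ⟨hn, hyu⟩, rfl⟩
    have hcov : s ⊆ ⋃ u ∈ comps, closure (orb '' {n | K ≤ n ∧ orb n ∈ u}) := by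
      have hsΩ : s ⊆ Ω := by
        rw [← hcUnion]; intro y hy; exact Set.mem_biUnion hs hy
      refine hsΩ.trans ?_
      rw [← hdense K hK, ← closure_finset_biUnion' comps (fun u => orb '' {n | K ≤ n ∧ orb n ∈ u})]
      exact closure_mono hsplit
    have hcl : ∀ u ∈ comps, closure (orb '' {n | K ≤ n ∧ orb n ∈ u}) ⊆ u := by
      intro u hu
      apply closure_minimal _ (hcCl u hu)
      rintro y ⟨n, hn, rfl⟩
      exact hn.2
    obtain ⟨u, hu, hsu⟩ := irred_subset_finset_biUnion (hcIrr s hs) comps _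
      (fun u _ => isClosed_closure) hcov
    by_cases hus : u = s
    · subst hus
      exact subset_antisymm (hcl u hu) hsu
    · exfalso
      apply hcIrred s hs
      refine (hsu.trans (hcl u hu)).trans ?_
      intro y hy
      exact Set.mem_biUnion ⟨hu, hus⟩ hy
  -- exclusive visits are dense
  have hexcl_dense : ∀ s ∈ comps, ∀ K, M ≤ K →
      closure (orb '' {n | K ≤ n ∧ orb n ∈ s ∧ ∀ u ∈ comps, u ≠ s → orb n ∉ u}) = s := by
    intro s hs K hK
    set Ex : Set ℕ := {n | K ≤ n ∧ orb n ∈ s ∧ ∀ u ∈ comps, u ≠ s → orb n ∉ u} with hExdef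
    set Rt : Set ℕ := {n | K ≤ n ∧ orb n ∈ s ∧ ¬ (∀ u ∈ comps, u ≠ s → orb n ∉ u)} with hRtdef
    have hsplitt : {n | K ≤ n ∧ orb n ∈ s} = Ex ∪ Rt := by
      ext n
      simp only [hExdef, hRtdef, Set.mem_setOf_eq, Set.mem_union]
      by_cases h : ∀ u ∈ comps, u ≠ s → orb n ∉ u <;> tauto
    have h1 : s = closure (orb '' Ex) ∪ closure (orb '' Rt) := by
      rw [← hcomp_dense s hs K hK, hsplitt, Set.image_union, closure_union]
    set Bd : Set X := s ∩ ⋃ u ∈ (↑comps : Set (Set X)) \ {s}, u with hBddef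
    have hBdcl : IsClosed Bd := by
      apply (hcCl s hs).inter
      apply Set.Finite.isClosed_biUnion ((comps.finite_toSet).subset Set.diff_subset)
      intro u hu
      exact hcCl u hu.1
    have hRtsub : closure (orb '' Rt) ⊆ Bd := by
      apply closure_minimal _ hBdcl
      rintro y ⟨n, hn, rfl⟩
      refine ⟨hn.2.1, ?_⟩
      have h2 := hn.2.2
      push_neg at h2
      obtain ⟨u, hu, hune, hmem⟩ := h2
      exact Set.mem_biUnion ⟨hu, hune⟩ hmem
    have hscover : s ⊆ closure (orb '' Ex) ∪ Bd := by
      rw [h1]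
      exact Set.union_subset_union_right _ hRtsub
    rcases preirr_union_closed (hcIrr s hs).2 isClosed_closure hBdcl hscover with h | h
    · apply subset_antisymm _ h
      apply closure_minimal _ (hcCl s hs)
      rintro y ⟨n, hn, rfl⟩
      exact hn.2.1
    · exfalso
      exact hcIrred s hs (h.trans Set.inter_subset_right)
  -- the step map on components
  have htimes_ne : ∀ s ∈ comps, ∀ K, M ≤ K → (orb '' {n | K ≤ n ∧ orb n ∈ s} : Set X).Nonempty := by
    intro s hs K hK
    rcases Set.eq_empty_or_nonempty (orb '' {n | K ≤ n ∧ orb n ∈ s}) with he | hne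
    · exfalso
      have h1 := hcomp_dense s hs K hK
      rw [he, closure_empty] at h1
      exact Set.not_nonempty_empty (h1 ▸ (hcIrr s hs).nonempty)
    · exact hne
  have hstep0 : ∀ s ∈ comps, ∃ u, u ∈ comps ∧ ∀ y ∈ s ∩ U, Φ y ∈ u := by
    intro s hs
    have hsne : (s ∩ U).Nonempty := by
      obtain ⟨y, n, hn, rfl⟩ := htimes_ne s hs M le_rfl
      exact ⟨orb n, hn.2, horbU n⟩
    have hirr2 : IsIrreducible (s ∩ U) := irred_inter_open (hcIrr s hs) hU hsne
    have hirr3 : IsIrreducible (closure (Φ '' (s ∩ U))) :=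
      (hirr2.image Φ (hΦ.mono Set.inter_subset_right)).closure
    have himgΩ : Φ '' (s ∩ U) ⊆ Ω := by
      rintro _ ⟨y, hy, rfl⟩
      have h2 := mapsTo_closure hU hΦ 1 hΩcl
        (A := orb '' {n | M ≤ n ∧ orb n ∈ s}) (B := Ω)
        (by rintro _ ⟨n, _, rfl⟩; exact horbdom n 1)
        (by rintro _ ⟨_, ⟨n, hn, rfl⟩, rfl⟩
            rw [horb]
            exact horbΩ (1 + n) (by have := hn.1; omega))
      have hy1 : y ∈ closure (orb '' {n | M ≤ n ∧ orb n ∈ s}) := by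
        rw [hcomp_dense s hs M le_rfl]; exact hy.1
      have hy2 : y ∈ Udom Φ U 1 := by
        intro k hk
        interval_cases k
        exact hy.2
      have h3 := h2 y ⟨hy1, hy2⟩
      rwa [Function.iterate_one] at h3
    have hclΩ : closure (Φ '' (s ∩ U)) ⊆ Ω := closure_minimal himgΩ hΩcl
    obtain ⟨u, hu, hsu⟩ := irred_subset_finset_biUnion hirr3 comps (fun u => u)
      (fun u hu => hcCl u hu) (by rw [hcUnion]; exact hclΩ)
    exact ⟨u, hu, fun y hy => hsu (subset_closure ⟨y, hy, rfl⟩)⟩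
  choose! stepC hstepC1 hstepC2 using hstep0
  -- base exclusive point
  have hcompsne : comps.Nonempty := by
    by_contra h
    rw [Finset.not_nonempty_iff_eq_empty] at h
    subst h
    simp only [Finset.notMem_empty, Set.iUnion_of_empty, Set.iUnion_empty] at hcUnion
    exact Set.notMem_empty _ (hcUnion ▸ horbΩ M le_rfl)
  obtain ⟨s₀, hs₀⟩ := hcompsne
  obtain ⟨n₀, hn₀M, hn₀s, hn₀ex⟩ : ∃ n, M ≤ n ∧ orb n ∈ s₀ ∧
      ∀ u ∈ comps, u ≠ s₀ → orb n ∉ u := by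
    have h1 := hexcl_dense s₀ hs₀ M le_rfl
    rcases Set.eq_empty_or_nonempty
      (orb '' {n | M ≤ n ∧ orb n ∈ s₀ ∧ ∀ u ∈ comps, u ≠ s₀ → orb n ∉ u}) with he | hne
    · exfalso
      rw [he, closure_empty] at h1
      exact Set.not_nonempty_empty (h1 ▸ (hcIrr s₀ hs₀).nonempty)
    · obtain ⟨y, n, hn, rfl⟩ := hne
      exact ⟨n, hn.1, hn.2.1, hn.2.2⟩
  set Γ : ℕ → Set X := fun k => stepC^[k] s₀ with hΓdef
  have hΓcomps : ∀ k, Γ k ∈ comps := by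
    intro k
    induction k with
    | zero => exact hs₀
    | succ k ih =>
      have h1 : Γ (k + 1) = stepC (Γ k) := Function.iterate_succ_apply' stepC k s₀
      rw [h1]
      exact hstepC1 (Γ k) ih
  have hΓorb : ∀ k, orb (n₀ + k) ∈ Γ k := by
    intro k
    induction k with
    | zero => exact hn₀s
    | succ k ih =>
      have h1 : Γ (k + 1) = stepC (Γ k) := Function.iterate_succ_apply' stepC k s₀
      have h2 : orb (n₀ + (k + 1)) = Φ (orb (n₀ + k)) := by
        show Φ^[n₀ + (k+1)] x = Φ (Φ^[n₀ + k] x)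
        rw [show n₀ + (k+1) = (n₀ + k) + 1 by omega]
        exact Function.iterate_succ_apply' Φ (n₀ + k) x
      rw [h1, h2]
      exact hstepC2 (Γ k) (hΓcomps k) _ ⟨ih, horbU _⟩
  have hΓshift : ∀ k j, Γ (k + j) = stepC^[j] (Γ k) := by
    intro k j
    show stepC^[k + j] s₀ = stepC^[j] (stepC^[k] s₀)
    rw [Nat.add_comm k j]
    exact Function.iterate_add_apply stepC j k s₀
  -- pigeonhole : eventual periodicity
  obtain ⟨a, hρex⟩ : ∃ a, ∃ d, 0 < d ∧ Γ (a + d) = Γ a := by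
    have hfin : Finite {s : Set X // s ∈ comps} := by
      exact FinsetCoe.fintype comps |>.finite
    obtain ⟨k₁, k₂, hkne, hkeq⟩ := Finite.exists_ne_map_eq_of_infinite
      (fun k : ℕ => (⟨Γ k, hΓcomps k⟩ : {s : Set X // s ∈ comps}))
    have hkeq' : Γ k₁ = Γ k₂ := congrArg Subtype.val hkeq
    rcases Nat.lt_or_ge k₁ k₂ with h | h
    · exact ⟨k₁, k₂ - k₁, by omega, by rw [show k₁ + (k₂ - k₁) = k₂ by omega]; exact hkeq'.symm⟩
    · have hlt : k₂ < k₁ := by omega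
      exact ⟨k₂, k₁ - k₂, by omega, by rw [show k₂ + (k₁ - k₂) = k₁ by omega]; exact hkeq'⟩
  set ρ : ℕ := Nat.find hρex with hρdef
  have hρpos : 0 < ρ := (Nat.find_spec hρex).1
  have hρeq : Γ (a + ρ) = Γ a := (Nat.find_spec hρex).2
  have hΓper : ∀ l, a ≤ l → Γ (l + ρ) = Γ l := by
    intro l hl
    have h1 : l + ρ = (a + ρ) + (l - a) := by omega
    have h2 : l = a + (l - a) := by omega
    calc Γ (l + ρ) = Γ ((a + ρ) + (l - a)) := by rw [← h1]
      _ = stepC^[l - a] (Γ (a + ρ)) := hΓshift _ _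
      _ = stepC^[l - a] (Γ a) := by rw [hρeq]
      _ = Γ (a + (l - a)) := (hΓshift a (l - a)).symm
      _ = Γ l := by rw [← h2]
  have hΓperm : ∀ l j, a ≤ l → Γ (l + j * ρ) = Γ l := by
    intro l j hl
    induction j with
    | zero => simp
    | succ j ih =>
      have h1 : l + (j + 1) * ρ = (l + j * ρ) + ρ := by ring
      rw [h1, hΓper _ (by omega), ih]
  have hΓmod : ∀ k, a ≤ k → Γ k = Γ (a + (k - a) % ρ) := by
    intro k hk
    have h1 : k = (a + (k - a) % ρ) + ((k - a) / ρ) * ρ := by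
      have h2 := Nat.mod_add_div (k - a) ρ
      have h3 : (k - a) % ρ + ρ * ((k - a) / ρ) = k - a := h2
      have h4 : ρ * ((k - a) / ρ) = ((k - a) / ρ) * ρ := Nat.mul_comm _ _
      omega
    conv_lhs => rw [h1]
    exact hΓperm _ _ (by omega)
  have hΓdistinct : ∀ i j, i < j → j < ρ → Γ (a + i) ≠ Γ (a + j) := by
    intro i j hij hjρ heq
    have hper2 : ∀ l, a + i ≤ l → Γ (l + (j - i)) = Γ l := by
      intro l hl
      calc Γ (l + (j - i)) = Γ ((a + j) + (l - (a + i))) := congrArg Γ (by omega)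
        _ = stepC^[l - (a + i)] (Γ (a + j)) := hΓshift _ _
        _ = stepC^[l - (a + i)] (Γ (a + i)) := by rw [← heq]
        _ = Γ ((a + i) + (l - (a + i))) := (hΓshift _ _).symm
        _ = Γ l := congrArg Γ (by omega)
    have hd' : Γ (a + (ρ - (j - i))) = Γ a := by
      have h1 : Γ ((a + (ρ - (j - i))) + (j - i)) = Γ (a + (ρ - (j - i))) :=
        hper2 _ (by omega)
      have h2 : (a + (ρ - (j - i))) + (j - i) = a + ρ := by omega
      rw [h2, hρeq] at h1
      exact h1.symm
    exact Nat.find_min hρex (show ρ - (j - i) < ρ by omega) ⟨by omega, hd'⟩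
  -- labels
  set n₁ : ℕ := n₀ + a with hn₁def
  set Λ : ℕ → Set X := fun t => Γ (t - n₀) with hΛdef
  have hΛcomps : ∀ t, Λ t ∈ comps := fun t => hΓcomps _
  have hΛorb : ∀ t, n₀ ≤ t → orb t ∈ Λ t := by
    intro t ht
    have h1 := hΓorb (t - n₀)
    rw [show n₀ + (t - n₀) = t by omega] at h1
    exact h1
  have hΛcong : ∀ t t', n₁ ≤ t → n₁ ≤ t' → (t - n₁) % ρ = (t' - n₁) % ρ → Λ t = Λ t' := by
    intro t t' ht ht' hcong
    show Γ (t - n₀) = Γ (t' - n₀)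
    rw [hΓmod (t - n₀) (by omega), hΓmod (t' - n₀) (by omega)]
    congr 2
    have e1 : t - n₀ - a = t - n₁ := by omega
    have e2 : t' - n₀ - a = t' - n₁ := by omega
    rw [e1, e2, hcong]
  have hΛinj : ∀ t t', n₁ ≤ t → n₁ ≤ t' → Λ t = Λ t' → (t - n₁) % ρ = (t' - n₁) % ρ := by
    intro t t' ht ht' heq
    by_contra hne
    have h1 : Γ (t - n₀) = Γ (t' - n₀) := heq
    rw [hΓmod (t - n₀) (by omega), hΓmod (t' - n₀) (by omega)] at h1
    have e1 : t - n₀ - a = t - n₁ := by omega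
    have e2 : t' - n₀ - a = t' - n₁ := by omega
    rw [e1, e2] at h1
    have hm1 : (t - n₁) % ρ < ρ := Nat.mod_lt _ hρpos
    have hm2 : (t' - n₁) % ρ < ρ := Nat.mod_lt _ hρpos
    rcases Nat.lt_or_ge ((t - n₁) % ρ) ((t' - n₁) % ρ) with h | h
    · exact hΓdistinct _ _ h hm2 h1
    · exact hΓdistinct _ _ (by omega) hm1 h1.symm
  -- classes mod ρ are dense in their component
  have hclass_dense : ∀ t, n₁ ≤ t → ∀ K,
      closure ((fun k => orb (t + ρ * k)) '' Set.Ici K) = Λ t := by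
    intro t ht K
    have hΛt := hΛcomps t
    apply subset_antisymm
    · apply closure_minimal _ (hcCl _ hΛt)
      rintro _ ⟨k, _, rfl⟩
      have h1 : orb (t + ρ * k) ∈ Λ (t + ρ * k) := hΛorb _ (by omega)
      have h2 : Λ (t + ρ * k) = Λ t := by
        apply hΛcong _ _ (by omega) ht
        have e1 : t + ρ * k - n₁ = (t - n₁) + ρ * k := by omega
        rw [e1]
        exact Nat.add_mul_mod_self_left _ _ _
      rw [← h2]; exact h1
    · set K' := max M (t + ρ * K) with hK'def
      have h1 := hexcl_dense (Λ t) hΛt K' (le_max_left _ _)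
      rw [← h1]
      apply closure_mono
      rintro _ ⟨n, hn, rfl⟩
      have hnn₁ : n₁ ≤ n := by
        have := hn.1
        have h2 : t + ρ * K ≤ K' := le_max_right _ _
        omega
      have hΛn : Λ n = Λ t := by
        by_contra hne
        exact (hn.2.2 (Λ n) (hΛcomps n) hne) (hΛorb n (by omega))
      have hcong := hΛinj n t hnn₁ ht hΛn
      obtain ⟨k, hkK, hkeq⟩ := cong_extract hρpos ht
        (le_trans (le_max_right _ _) hn.1) hcong
      exact ⟨k, hkK, congrArg orb hkeq.symm⟩
  -- total self-density
  have htsd : ∀ e, 0 < e → ∀ b, n₁ ≤ b → ∃ K₂, ∀ K, K₂ ≤ K →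
      closure ((fun k => orb (b + (ρ * e) * k)) '' Set.Ici K) = Λ b := by
    intro e he b hb
    set m := ρ * e with hmdef
    set D : ℕ → ℕ → Set X := fun j K =>
      closure ((fun k => orb ((b + ρ * j) + m * k)) '' Set.Ici K) with hDdef
    have hDcl : ∀ j K, IsClosed (D j K) := fun _ _ => isClosed_closure
    have hDanti : ∀ j, ∀ K K' : ℕ, K ≤ K' → D j K' ⊆ D j K := fun j K K' h =>
      closure_mono (Set.image_mono (Set.Ici_subset_Ici.mpr h))
    have hDstab : ∀ j, ∃ K₀, ∀ K, K₀ ≤ K → D j K = D j K₀ := fun j =>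
      antitone_stabilizes (D j) (fun K => hDcl j K) (hDanti j)
    choose Kst hKst using hDstab
    set B : ℕ → Set X := fun j => D j (Kst j) with hBdef
    have hBcl : ∀ j, IsClosed (B j) := fun j => hDcl _ _
    have hBsubΛ : ∀ j, B j ⊆ Λ b := by
      intro j
      apply closure_minimal _ (hcCl _ (hΛcomps b))
      rintro _ ⟨k, _, rfl⟩
      have h1 : orb (b + ρ * j + m * k) ∈ Λ (b + ρ * j + m * k) := hΛorb _ (by omega)
      have h2 : Λ (b + ρ * j + m * k) = Λ b := by
        apply hΛcong _ _ (by omega) hb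
        have e2 : ρ * (j + e * k) = ρ * j + m * k := by rw [hmdef]; ring
        have e1 : b + ρ * j + m * k - n₁ = (b - n₁) + ρ * (j + e * k) := by omega
        rw [e1]
        exact Nat.add_mul_mod_self_left _ _ _
      rw [← h2]; exact h1
    have hDeq : ∀ j K, D (j + e) K = D j (K + 1) := by
      intro j K
      have himg : ((fun k => orb ((b + ρ * (j + e)) + m * k)) '' Set.Ici K)
          = ((fun k => orb ((b + ρ * j) + m * k)) '' Set.Ici (K + 1)) := by
        ext y
        constructor
        · rintro ⟨k, hk, rfl⟩
          have hk' : K ≤ k := hk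
          refine ⟨k + 1, Set.mem_Ici.mpr (by omega), ?_⟩
          congr 1
          rw [hmdef]
          ring
        · rintro ⟨k, hk, rfl⟩
          have hk' : K + 1 ≤ k := hk
          obtain ⟨k', rfl⟩ : ∃ k', k = k' + 1 := ⟨k - 1, by omega⟩
          refine ⟨k', Set.mem_Ici.mpr (by omega), ?_⟩
          congr 1
          rw [hmdef]
          ring
      show closure _ = closure _
      rw [himg]
    have hBper : ∀ j, B (j + e) = B j := by
      intro j
      set Kb := max (Kst (j + e)) (Kst j) with hKb
      have hKb1 : Kst (j + e) ≤ Kb := le_max_left _ _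
      have hKb2 : Kst j ≤ Kb := le_max_right _ _
      calc B (j + e) = D (j + e) Kb := (hKst (j + e) Kb hKb1).symm
        _ = D j (Kb + 1) := hDeq j Kb
        _ = D j (Kst j) := hKst j (Kb + 1) (by omega)
    have hcover : Λ b ⊆ ⋃ j ∈ Finset.range e, B j := by
      set Ks := (Finset.range e).sup Kst with hKs
      have h1 := hclass_dense b hb (e * (Ks + 1))
      rw [← h1]
      apply closure_minimal _ (Set.Finite.isClosed_biUnion (Finset.finite_toSet _)
        (fun j _ => hBcl j))
      rintro _ ⟨q, hq, rfl⟩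
      have hqe : q % e < e := Nat.mod_lt _ he
      refine Set.mem_biUnion (Finset.mem_range.mpr hqe) ?_
      have hdiv : Ks + 1 ≤ q / e := by
        have h2 := Nat.div_le_div_right (c := e) hq
        rwa [Nat.mul_div_cancel_left _ he] at h2
      have hKstle : Kst (q % e) ≤ q / e := by
        have h2 : Kst (q % e) ≤ Ks := Finset.le_sup (Finset.mem_range.mpr hqe)
        omega
      have hidx : b + ρ * q = (b + ρ * (q % e)) + m * (q / e) := by
        have h3 := Nat.mod_add_div q e
        have h4 : ρ * q = ρ * (q % e) + ρ * (e * (q / e)) := by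
          rw [← Nat.mul_add, h3]
        have h5 : m * (q / e) = ρ * (e * (q / e)) := by rw [hmdef]; ring
        omega
      exact subset_closure ⟨q / e, hKstle, congrArg orb hidx.symm⟩
    obtain ⟨j₀, hj₀, hj₀sub⟩ := irred_subset_finset_biUnion (hcIrr _ (hΛcomps b))
      (Finset.range e) B (fun j _ => hBcl j) hcover
    have hj₀e : j₀ < e := Finset.mem_range.mp hj₀
    have hBj₀ : B j₀ = Λ b := subset_antisymm (hBsubΛ j₀) hj₀sub
    have hstepB : ∀ j, B j = Λ b → B (j + 1) = Λ b := by
      intro j hBj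
      apply subset_antisymm (hBsubΛ _)
      set K₃ := max (Kst j) (Kst (j + 1)) with hK₃
      set A : Set X := (fun k => orb ((b + ρ * j) + m * k)) '' Set.Ici K₃ with hAdef
      have hAdom : A ⊆ Udom Φ U ρ := by rintro _ ⟨k, _, rfl⟩; exact horbdom _ _
      have hAimg : Φ^[ρ] '' A ⊆ B (j + 1) := by
        rintro _ ⟨_, ⟨k, hk, rfl⟩, rfl⟩
        rw [horb]
        have e2 : ρ * (j + 1) = ρ * j + ρ := by ring
        have hidx : ρ + (b + ρ * j + m * k) = (b + ρ * (j + 1)) + m * k := by omega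
        rw [hidx]
        have hkK : Kst (j + 1) ≤ k :=
          le_trans (le_max_right (Kst j) (Kst (j + 1))) hk
        exact subset_closure ⟨k, hkK, rfl⟩
      have hmain := mapsTo_closure hU hΦ ρ (hBcl (j + 1)) hAdom hAimg
      have hclA : closure A = Λ b := by
        have h4 : closure A = D j K₃ := rfl
        rw [h4, hKst j K₃ (le_max_left _ _)]
        exact hBj
      have hpts : ∀ k : ℕ, 1 ≤ k → orb (b + ρ * k) ∈ B (j + 1) := by
        intro k hk
        have h5 : orb (b + ρ * (k - 1)) ∈ closure A ∩ Udom Φ U ρ := by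
          constructor
          · rw [hclA]
            have h6 : orb (b + ρ * (k - 1)) ∈ Λ (b + ρ * (k - 1)) := hΛorb _ (by omega)
            have h7 : Λ (b + ρ * (k - 1)) = Λ b := by
              apply hΛcong _ _ (by omega) hb
              have e1 : b + ρ * (k - 1) - n₁ = (b - n₁) + ρ * (k - 1) := by omega
              rw [e1]; exact Nat.add_mul_mod_self_left _ _ _
            rw [← h7]; exact h6
          · exact horbdom _ _
        have h8 := hmain _ h5
        rw [horb] at h8
        have e3 : ρ * (k - 1 + 1) = ρ * (k - 1) + ρ := by ring
        rw [show k - 1 + 1 = k by omega] at e3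
        have hidx2 : ρ + (b + ρ * (k - 1)) = b + ρ * k := by omega
        rwa [hidx2] at h8
      rw [← hclass_dense b hb 1]
      apply closure_minimal _ (hBcl (j + 1))
      rintro _ ⟨k, hk, rfl⟩
      exact hpts k hk
    have hprop : ∀ i, B (j₀ + i) = Λ b := by
      intro i
      induction i with
      | zero => exact hBj₀
      | succ i ih =>
        have h1 := hstepB (j₀ + i) ih
        rwa [show j₀ + i + 1 = j₀ + (i + 1) by omega] at h1
    have hB0 : B 0 = Λ b := by
      have h1 := hprop (e - j₀)
      rw [show j₀ + (e - j₀) = e by omega] at h1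
      have h2 : B (0 + e) = B 0 := hBper 0
      rw [Nat.zero_add] at h2
      rw [← h2]; exact h1
    refine ⟨Kst 0, fun K hK => ?_⟩
    have h9 : closure ((fun k => orb (b + (ρ * e) * k)) '' Set.Ici K) = D 0 K := rfl
    rw [h9, hKst 0 K hK]
    exact hB0
  -- classes whose component is not inside Y have null return set
  have hnull : ∀ t, n₁ ≤ t → ¬ (Λ t ⊆ Y) →
      banachDensity {k | orb (t + ρ * k) ∈ Y} = 0 := by
    intro t ht hnot
    by_contra hne
    have hpos : 0 < banachDensity {k | orb (t + ρ * k) ∈ Y} := banachDensity_pos_of_ne hne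
    set q : ℕ → X := fun k => orb (t + ρ * k) with hqdef
    set Rt : Set ℕ := {k | orb (t + ρ * k) ∈ Y} with hRtdef
    set 𝒱 : Set (Set X) :=
      {V | ∃ T : Set ℕ, T ⊆ Rt ∧ 0 < banachDensity T ∧ V = closure (q '' T)} with h𝒱def
    obtain ⟨V, hV𝒱, hVmin⟩ := exists_min_closed 𝒱 ⟨closure (q '' Rt), Rt, subset_rfl, hpos, rfl⟩
      (by rintro s ⟨T, _, _, rfl⟩; exact isClosed_closure)
    obtain ⟨T₀, hT₀R, hT₀pos, hVeq⟩ := hV𝒱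
    obtain ⟨e, he1, hepos⟩ := exists_gap hT₀pos
    set A : Set ℕ := {n | n ∈ T₀ ∧ n + e ∈ T₀} with hAdef
    have hAR : A ⊆ Rt := fun n hn => hT₀R hn.1
    have hAV : closure (q '' A) = V := by
      apply hVmin _ ⟨A, hAR, hepos, rfl⟩
      rw [hVeq]
      exact closure_mono (Set.image_mono (fun n hn => hn.1))
    set A' : Set ℕ := (fun k => k + e) '' A with hA'def
    have hA'T₀ : A' ⊆ T₀ := by rintro _ ⟨n, hn, rfl⟩; exact hn.2
    have hA'pos : 0 < banachDensity A' := lt_of_lt_of_le hepos (banachDensity_shift_ge A e)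
    have hA'V : closure (q '' A') = V := by
      apply hVmin _ ⟨A', hA'T₀.trans hT₀R, hA'pos, rfl⟩
      rw [hVeq]
      exact closure_mono (Set.image_mono hA'T₀)
    have hVcl : IsClosed V := by rw [hVeq]; exact isClosed_closure
    have himg : Φ^[ρ * e] '' (q '' A) ⊆ V := by
      rintro _ ⟨_, ⟨k, hk, rfl⟩, rfl⟩
      rw [horb]
      have e1 : ρ * (k + e) = ρ * k + ρ * e := by ring
      have hidx : ρ * e + (t + ρ * k) = t + ρ * (k + e) := by omega
      rw [hidx, ← hA'V]
      exact subset_closure ⟨k + e, ⟨k, hk, rfl⟩, rfl⟩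
    have hstab := mapsTo_closure hU hΦ (ρ * e) hVcl
      (by rintro _ ⟨k, _, rfl⟩; exact horbdom _ _) himg
    have hAne : A.Nonempty := by
      rcases Set.eq_empty_or_nonempty A with h | h
      · rw [h, banachDensity_empty] at hepos
        exact absurd hepos (lt_irrefl 0)
      · exact h
    obtain ⟨α, hα⟩ := hAne
    have horbV : ∀ j : ℕ, orb ((t + ρ * α) + (ρ * e) * j) ∈ V := by
      intro j
      induction j with
      | zero =>
        rw [Nat.mul_zero, Nat.add_zero, ← hAV]
        exact subset_closure ⟨α, hα, rfl⟩
      | succ j ih =>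
        have h5 : orb (t + ρ * α + (ρ * e) * j) ∈ closure (q '' A) ∩ Udom Φ U (ρ * e) := by
          rw [hAV]
          exact ⟨ih, horbdom _ _⟩
        have h6 := hstab _ h5
        rw [horb] at h6
        have e1 : ρ * e * (j + 1) = ρ * e * j + ρ * e := by ring
        have hidx2 : ρ * e + (t + ρ * α + ρ * e * j) = t + ρ * α + ρ * e * (j + 1) := by omega
        rwa [hidx2] at h6
    obtain ⟨K₂, hK₂⟩ := htsd e he1 (t + ρ * α) (by omega)
    have h1 : Λ (t + ρ * α) ⊆ V := by
      rw [← hK₂ K₂ le_rfl]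
      apply closure_minimal _ hVcl
      rintro _ ⟨j, _, rfl⟩
      exact horbV j
    have h2 : Λ (t + ρ * α) = Λ t := by
      apply hΛcong _ _ (by omega) ht
      have e1 : t + ρ * α - n₁ = (t - n₁) + ρ * α := by omega
      rw [e1]; exact Nat.add_mul_mod_self_left _ _ _
    have hVY : V ⊆ Y := by
      rw [hVeq]
      apply closure_minimal _ hY
      rintro _ ⟨k, hkR, rfl⟩
      exact hT₀R hkR
    exact hnot ((h2 ▸ h1).trans hVY)
  -- assembly
  set full : Set ℕ := {tt | n₁ ≤ tt ∧ tt < n₁ + ρ ∧ Λ tt ⊆ Y} with hfulldef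
  set heads : Set ℕ := {ss | ss < n₁ + ρ ∧ orb ss ∈ Y} with hheadsdef
  have hfullfin : ((fun tt => (tt, ρ)) '' full).Finite := by
    apply Set.Finite.image
    apply Set.Finite.subset (Set.finite_Ico n₁ (n₁ + ρ))
    intro tt htt; exact ⟨htt.1, htt.2.1⟩
  have hheadsfin : ((fun ss => (ss, 0)) '' heads).Finite := by
    apply Set.Finite.image
    apply Set.Finite.subset (Set.finite_Ico 0 (n₁ + ρ))
    intro ss hss; exact ⟨Nat.zero_le _, hss.1⟩
  set F : Finset (ℕ × ℕ) := (hfullfin.union hheadsfin).toFinset with hFdef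
  set UF : Set ℕ := ⋃ pr ∈ F, {m : ℕ | ∃ n : ℕ, m = pr.1 + n * pr.2} with hUFdef
  have hmemF : ∀ pr : ℕ × ℕ, pr ∈ F ↔
      (∃ tt ∈ full, (tt, ρ) = pr) ∨ (∃ ss ∈ heads, (ss, 0) = pr) := by
    intro pr
    rw [hFdef, Set.Finite.mem_toFinset, Set.mem_union]
    constructor
    · rintro (⟨tt, htt, rfl⟩ | ⟨ss, hss, rfl⟩)
      · exact Or.inl ⟨tt, htt, rfl⟩
      · exact Or.inr ⟨ss, hss, rfl⟩
    · rintro (⟨tt, htt, rfl⟩ | ⟨ss, hss, rfl⟩)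
      · exact Or.inl ⟨tt, htt, rfl⟩
      · exact Or.inr ⟨ss, hss, rfl⟩
  have hUFS : UF ⊆ S := by
    intro m hm
    rw [hUFdef] at hm
    simp only [Set.mem_iUnion] at hm
    obtain ⟨pr, hprF, n, hmn⟩ := hm
    rcases (hmemF pr).mp hprF with ⟨tt, htt, rfl⟩ | ⟨ss, hss, rfl⟩
    · have hmn' : m = tt + n * ρ := hmn
      have httn₁ : n₁ ≤ tt := htt.1
      have hmn₁ : n₁ ≤ m := by
        have := htt.1; omega
      have hΛm : Λ m = Λ tt := by
        apply hΛcong _ _ hmn₁ htt.1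
        have e1 : m - n₁ = (tt - n₁) + n * ρ := by omega
        rw [e1]
        exact Nat.add_mul_mod_self_right _ _ _
      have h1 : orb m ∈ Λ m := hΛorb m (by omega)
      exact htt.2.2 (hΛm ▸ h1)
    · have hmn' : m = ss := by
        have : m = ss + n * 0 := hmn
        omega
      subst hmn'
      exact hss.2
  set Z : Set ℕ := S \ UF with hZdef
  have hZcover : Z ⊆ ⋃ tt ∈ Finset.Ico n₁ (n₁ + ρ),
      (if Λ tt ⊆ Y then (∅ : Set ℕ) else (fun k => tt + ρ * k) '' {k | orb (tt + ρ * k) ∈ Y}) := by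
    intro n hn
    obtain ⟨hnS, hnUF⟩ := hn
    have hncase : n₁ + ρ ≤ n := by
      by_contra hlt
      push_neg at hlt
      apply hnUF
      rw [hUFdef]
      apply Set.mem_biUnion ((hmemF (n, 0)).mpr (Or.inr ⟨n, ⟨hlt, hnS⟩, rfl⟩))
      refine ⟨0, ?_⟩
      show n = n + 0 * 0
      omega
    set tt := n₁ + (n - n₁) % ρ with httdef
    have httlt : tt < n₁ + ρ := by
      have := Nat.mod_lt (n - n₁) hρpos
      omega
    have hdm := Nat.div_add_mod (n - n₁) ρ
    set k := (n - n₁) / ρ with hkdef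
    have hneq : n = tt + ρ * k := by omega
    by_cases hfull : Λ tt ⊆ Y
    · exfalso
      apply hnUF
      rw [hUFdef]
      apply Set.mem_biUnion ((hmemF (tt, ρ)).mpr (Or.inl ⟨tt, ⟨by omega, httlt, hfull⟩, rfl⟩))
      refine ⟨k, ?_⟩
      show n = tt + k * ρ
      rw [Nat.mul_comm k ρ]
      exact hneq
    · apply Set.mem_biUnion (Finset.mem_Ico.mpr ⟨by omega, httlt⟩)
      rw [if_neg hfull]
      refine ⟨k, ?_, hneq.symm⟩
      show orb (tt + ρ * k) ∈ Y
      rw [← hneq]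
      exact hnS
  have hZzero : banachDensity Z = 0 := by
    apply le_antisymm _ (banachDensity_nonneg Z)
    calc banachDensity Z ≤ banachDensity (⋃ tt ∈ Finset.Ico n₁ (n₁ + ρ),
        (if Λ tt ⊆ Y then (∅ : Set ℕ) else (fun k => tt + ρ * k) '' {k | orb (tt + ρ * k) ∈ Y})) :=
          banachDensity_mono hZcover
      _ ≤ ∑ tt ∈ Finset.Ico n₁ (n₁ + ρ), banachDensity
          (if Λ tt ⊆ Y then (∅ : Set ℕ) else (fun k => tt + ρ * k) '' {k | orb (tt + ρ * k) ∈ Y}) :=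
          banachDensity_biUnion_le _ _
      _ = 0 := by
          apply Finset.sum_eq_zero
          intro tt httI
          by_cases hfull : Λ tt ⊆ Y
          · rw [if_pos hfull]
            exact banachDensity_empty
          · rw [if_neg hfull]
            apply le_antisymm _ (banachDensity_nonneg _)
            have h1 := banachDensity_affine_le {k | orb (tt + ρ * k) ∈ Y} tt ρ hρpos
            rw [hnull tt (Finset.mem_Ico.mp httI).1 hfull] at h1
            exact h1
  refine ⟨F, Z, hZzero, ?_⟩
  show S = UF ∪ Z
  apply subset_antisymm
  · intro n hn
    by_cases h : n ∈ UF
    · exact Or.inl h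
    · exact Or.inr ⟨hn, h⟩
  · rintro n (h | h)
    · exact hUFS h
    · exact h.1
end

section
/- Let X be a Noetherian topological space, let f : X → X be a continuous map, let x ∈ X, let (x₋ₙ)_{n ≥ 0} be a coherent backward orbit of x with respect to f, and let Y ⊆ X be a closed subset. If the set S = { n ∈ ℕ : x₋ₙ ∈ Y } has positive Banach density, then S contains an infinite arithmetic progression. -/
open Filter Set

noncomputable def bCnt (A : Set ℕ) (b L : ℕ) : ℕ := (A ∩ Set.Ico b (b + L)).ncard
noncomputable def bFn (A : Set ℕ) (L : ℕ) : ℝ := ⨆ b : ℕ, (bCnt A b L : ℝ) / L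

lemma banachDensity_eq (A : Set ℕ) : banachDensity A = Filter.limsup (bFn A) Filter.atTop := rfl

open scoped Classical in
lemma bCnt_eq (A : Set ℕ) (b L : ℕ) :
    bCnt A b L = ((Finset.Ico b (b + L)).filter (· ∈ A)).card := by
  rw [bCnt, ← Set.ncard_coe_finset]
  congr 1
  ext m
  simp [and_comm]

lemma bCnt_le (A : Set ℕ) (b L : ℕ) : bCnt A b L ≤ L := by
  classical
  rw [bCnt_eq]
  calc ((Finset.Ico b (b + L)).filter (· ∈ A)).card ≤ (Finset.Ico b (b + L)).card :=
        Finset.card_filter_le _ _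
    _ = L := by rw [Nat.card_Ico]; omega

lemma bCnt_mono {A B : Set ℕ} (h : A ⊆ B) (b L : ℕ) : bCnt A b L ≤ bCnt B b L := by
  classical
  rw [bCnt_eq, bCnt_eq]
  apply Finset.card_le_card
  intro m hm
  simp only [Finset.mem_filter] at hm ⊢
  exact ⟨hm.1, h hm.2⟩


lemma term_nonneg (A : Set ℕ) (b L : ℕ) : 0 ≤ (bCnt A b L : ℝ) / L := by positivity

lemma term_le_one_s10 (A : Set ℕ) (b L : ℕ) : (bCnt A b L : ℝ) / L ≤ 1 := by
  rcases Nat.eq_zero_or_pos L with h | h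
  · simp [h]
  · rw [div_le_one (by exact_mod_cast h)]
    exact_mod_cast bCnt_le A b L

lemma bdd (A : Set ℕ) (L : ℕ) : BddAbove (Set.range fun b => (bCnt A b L : ℝ) / L) :=
  ⟨1, by rintro x ⟨b, rfl⟩; exact term_le_one_s10 A b L⟩

lemma bFn_nonneg (A : Set ℕ) (L : ℕ) : 0 ≤ bFn A L :=
  le_trans (term_nonneg A 0 L) (le_ciSup (bdd A L) 0)

lemma bFn_le_one (A : Set ℕ) (L : ℕ) : bFn A L ≤ 1 := ciSup_le fun b => term_le_one_s10 A b L

lemma term_le_bFn (A : Set ℕ) (b L : ℕ) : (bCnt A b L : ℝ) / L ≤ bFn A L := le_ciSup (bdd A L) b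

lemma bFn_mono {A B : Set ℕ} (h : A ⊆ B) (L : ℕ) : bFn A L ≤ bFn B L := by
  apply ciSup_le
  intro b
  exact le_trans (by gcongr; exact_mod_cast bCnt_mono h b L) (term_le_bFn B b L)

lemma isBdd_le (A : Set ℕ) : IsBoundedUnder (· ≤ ·) atTop (bFn A) :=
  Filter.isBoundedUnder_of ⟨1, fun L => bFn_le_one A L⟩

lemma isBdd_ge (A : Set ℕ) : IsBoundedUnder (· ≥ ·) atTop (bFn A) :=
  Filter.isBoundedUnder_of ⟨0, fun L => bFn_nonneg A L⟩

lemma isCobdd (A : Set ℕ) : IsCoboundedUnder (· ≤ ·) atTop (bFn A) :=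
  (isBdd_ge A).isCoboundedUnder_le


lemma banachDensity_mono {A B : Set ℕ} (h : A ⊆ B) : banachDensity A ≤ banachDensity B := by
  rw [banachDensity_eq, banachDensity_eq]
  exact limsup_le_limsup (Filter.Eventually.of_forall fun L => bFn_mono h L) (isCobdd A) (isBdd_le B)

lemma bCnt_shift (A : Set ℕ) (d b L : ℕ) : bCnt ((· + d) '' A) (b + d) L = bCnt A b L := by
  rw [bCnt, bCnt]
  have he : ((· + d) '' A) ∩ Set.Ico (b + d) (b + d + L) = (· + d) '' (A ∩ Set.Ico b (b + L)) := by
    ext m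
    simp only [Set.mem_inter_iff, Set.mem_image, Set.mem_Ico]
    constructor
    · rintro ⟨⟨t, ht, rfl⟩, h1, h2⟩
      exact ⟨t, ⟨ht, by omega, by omega⟩, rfl⟩
    · rintro ⟨t, ⟨ht, h1, h2⟩, rfl⟩
      exact ⟨⟨t, ht, rfl⟩, by omega, by omega⟩
  rw [he, Set.ncard_image_of_injective _ (add_left_injective d)]

lemma banachDensity_shift_le (A : Set ℕ) (d : ℕ) :
    banachDensity A ≤ banachDensity ((· + d) '' A) := by
  rw [banachDensity_eq, banachDensity_eq]
  refine limsup_le_limsup (Filter.Eventually.of_forall fun L => ?_) (isCobdd A)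
    (isBdd_le _)
  apply ciSup_le
  intro b
  calc (bCnt A b L : ℝ) / L = (bCnt ((· + d) '' A) (b + d) L : ℝ) / L := by rw [bCnt_shift]
    _ ≤ _ := term_le_bFn _ _ _

lemma infinite_of_banachDensity_pos {A : Set ℕ} (h : 0 < banachDensity A) : A.Infinite := by
  by_contra hfin
  rw [Set.not_infinite] at hfin
  have hc : ∀ b L : ℕ, bCnt A b L ≤ A.ncard := fun b L =>
    Set.ncard_le_ncard Set.inter_subset_left hfin
  have key : ∀ ε : ℝ, 0 < ε → banachDensity A ≤ ε := by
    intro ε hε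
    rw [banachDensity_eq]
    apply limsup_le_of_le (isCobdd A)
    rw [eventually_atTop]
    refine ⟨⌈(A.ncard : ℝ) / ε⌉₊ + 1, fun L hL => ?_⟩
    apply ciSup_le
    intro b
    have hL0 : (0:ℝ) < L := by
      have : 1 ≤ L := by omega
      exact_mod_cast Nat.lt_of_lt_of_le Nat.zero_lt_one this
    have h1 : ((A.ncard : ℝ)) / ε ≤ L := by
      have : (⌈(A.ncard : ℝ) / ε⌉₊ : ℝ) ≤ L := by exact_mod_cast Nat.le_of_succ_le hL
      exact le_trans (Nat.le_ceil _) this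
    have h2 : (bCnt A b L : ℝ) ≤ A.ncard := by exact_mod_cast hc b L
    rw [div_le_iff₀ hL0]
    calc (bCnt A b L : ℝ) ≤ A.ncard := h2
      _ ≤ ε * L := by rw [div_le_iff₀ hε] at h1; linarith
  linarith [key (banachDensity A / 2) (by linarith)]


open scoped Classical

lemma sum_card_filter_comm {α β : Type*} (I : Finset α) (P : Finset β) (Q : α → β → Prop) :
    ∑ m ∈ I, (P.filter (Q m)).card = ∑ p ∈ P, (I.filter fun m => Q m p).card := by
  simp only [Finset.card_filter]
  exact Finset.sum_comm

lemma exists_shift_density {A : Set ℕ} (hA : 0 < banachDensity A) :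
    ∃ d : ℕ, 0 < d ∧ 0 < banachDensity {n : ℕ | n ∈ A ∧ n + d ∈ A} := by
  by_contra hcon
  push_neg at hcon
  have hcon' : ∀ d : ℕ, 0 < d → banachDensity {n : ℕ | n ∈ A ∧ n + d ∈ A} ≤ 0 := hcon
  set γ := banachDensity A / 2 with hγ
  have hγpos : 0 < γ := by rw [hγ]; linarith
  set k := ⌈4 / γ⌉₊ with hk
  have hk4 : 4 ≤ (k : ℝ) * γ := by
    have h1 : 4 / γ ≤ (k : ℝ) := Nat.le_ceil _
    rw [div_le_iff₀ hγpos] at h1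
    linarith
  have hk1 : 1 ≤ k := Nat.ceil_pos.mpr (by positivity)
  have hkR : (0:ℝ) < k := by exact_mod_cast hk1
  set ε := 1 / (2 * (k : ℝ) ^ 2) with hε
  have hεpos : 0 < ε := by positivity
  -- eventual smallness of pair-correlation counts
  have hev : ∀ᶠ L in atTop, ∀ e ∈ Finset.Icc 1 k, bFn {n : ℕ | n ∈ A ∧ n + e ∈ A} L < ε := by
    rw [Filter.eventually_all_finset]
    intro e he
    rw [Finset.mem_Icc] at he
    have h0 : banachDensity {n : ℕ | n ∈ A ∧ n + e ∈ A} ≤ 0 := hcon' e he.1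
    rw [banachDensity_eq] at h0
    exact eventually_lt_of_limsup_lt (lt_of_le_of_lt h0 hεpos) (isBdd_le _)
  have hfreq : ∃ᶠ n in atTop, γ < bFn A n := by
    apply frequently_lt_of_lt_limsup (isCobdd A)
    rw [← banachDensity_eq]
    rw [hγ]; linarith
  obtain ⟨N, hN⟩ := eventually_atTop.mp hev
  obtain ⟨n, hnge, hγn⟩ := frequently_atTop.mp hfreq (max N (k + 1))
  have hnN : N ≤ n := le_trans (le_max_left _ _) hnge
  have hnk : k + 1 ≤ n := le_trans (le_max_right _ _) hnge
  set L := n + k with hL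
  have hL0 : (0:ℝ) < L := by
    have : 0 < L := by omega
    exact_mod_cast this
  have hball : ∀ e, 1 ≤ e → e ≤ k → ∀ b,
      (bCnt {n : ℕ | n ∈ A ∧ n + e ∈ A} b L : ℝ) < ε * L := by
    intro e h1 h2 b
    have h3 := hN L (by omega) e (Finset.mem_Icc.mpr ⟨h1, h2⟩)
    have ht := lt_of_le_of_lt (term_le_bFn _ b L) h3
    rw [div_lt_iff₀ hL0] at ht
    linarith
  -- choose a good interval for A
  have hex : ∃ b : ℕ, γ < (bCnt A b n : ℝ) / n := by
    by_contra h
    push_neg at h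
    exact absurd (ciSup_le h) (not_le.mpr hγn)
  obtain ⟨a, ha⟩ := hex
  have hn0 : (0:ℝ) < n := by
    have : 0 < n := by omega
    exact_mod_cast this
  have hca : γ * n < (bCnt A a n : ℝ) := by
    rw [lt_div_iff₀ hn0] at ha
    linarith
  -- the Finset counting
  set I : Finset ℕ := Finset.Ico a (a + L) with hI
  set Q : ℕ → ℕ → Prop := fun i m => i ≤ m ∧ m - i ∈ A with hQ
  set B : ℕ → Finset ℕ := fun i => I.filter (Q i) with hB
  have hlow : ∀ i ∈ Finset.range k, bCnt A a n ≤ (B i).card := by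
    intro i hi
    rw [Finset.mem_range] at hi
    rw [bCnt_eq]
    apply Finset.card_le_card_of_injOn (fun t => t + i)
    · intro t ht
      simp only [Finset.mem_coe, Finset.mem_filter, Finset.mem_Ico] at ht
      simp only [Finset.mem_coe, hB, hQ, Finset.mem_filter, hI, Finset.mem_Ico]
      refine ⟨⟨by omega, by omega⟩, by omega, ?_⟩
      have h5 : t + i - i = t := by omega
      rw [h5]; exact ht.2
    · exact Set.injOn_of_injective (add_left_injective i)
  have hsumlow : k * bCnt A a n ≤ ∑ i ∈ Finset.range k, (B i).card := by
    calc k * bCnt A a n = ∑ _i ∈ Finset.range k, bCnt A a n := by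
          rw [Finset.sum_const, Finset.card_range, smul_eq_mul]
      _ ≤ _ := Finset.sum_le_sum hlow
  -- double counting
  have hdc : ∑ i ∈ Finset.range k, (B i).card
      = ∑ m ∈ I, ((Finset.range k).filter fun i => Q i m).card := by
    simp only [hB, Finset.card_filter]
    exact Finset.sum_comm
  -- pointwise pair bound
  set P : Finset (ℕ × ℕ) := Finset.range k ×ˢ Finset.range k with hP
  have hpoint : ∀ m ∈ I, ((Finset.range k).filter fun i => Q i m).card
      ≤ 1 + (P.filter fun p => p.1 < p.2 ∧ Q p.1 m ∧ Q p.2 m).card := by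
    intro m _
    set F := (Finset.range k).filter fun i => Q i m with hF
    rcases Finset.eq_empty_or_nonempty F with hFe | hFne
    · rw [hFe]; simp
    · set i0 := F.min' hFne with hi0
      have hmem : i0 ∈ F := F.min'_mem hFne
      have hcard : F.card = 1 + (F.erase i0).card := by
        rw [Finset.card_erase_of_mem hmem]
        have : 1 ≤ F.card := Finset.card_pos.mpr hFne
        omega
      rw [hcard]
      apply Nat.add_le_add_left
      apply Finset.card_le_card_of_injOn (fun i => (i0, i))
      · intro i hi
        have hlt : i0 < i := Finset.min'_lt_of_mem_erase_min' _ hFne (by rw [← hi0]; exact hi)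
        have hiF : i ∈ F := Finset.mem_of_mem_erase hi
        simp only [hF, Finset.mem_filter, Finset.mem_range] at hmem hiF
        simp only [Finset.mem_coe, hP, Finset.mem_filter, Finset.mem_product, Finset.mem_range]
        exact ⟨⟨hmem.1, hiF.1⟩, hlt, hmem.2, hiF.2⟩
      · intro i _ i' _ h
        exact congrArg Prod.snd h
  have hsumup : ∑ m ∈ I, ((Finset.range k).filter fun i => Q i m).card
      ≤ L + ∑ m ∈ I, (P.filter fun p => p.1 < p.2 ∧ Q p.1 m ∧ Q p.2 m).card := by
    calc ∑ m ∈ I, ((Finset.range k).filter fun i => Q i m).card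
        ≤ ∑ m ∈ I, (1 + (P.filter fun p => p.1 < p.2 ∧ Q p.1 m ∧ Q p.2 m).card) :=
          Finset.sum_le_sum hpoint
      _ = I.card + ∑ m ∈ I, (P.filter fun p => p.1 < p.2 ∧ Q p.1 m ∧ Q p.2 m).card := by
          rw [Finset.sum_add_distrib, Finset.sum_const, smul_eq_mul, mul_one]
      _ = L + _ := by
          congr 1
          rw [hI, Nat.card_Ico]
          omega
  -- swap the pair sum
  have hswap : ∑ m ∈ I, (P.filter fun p => p.1 < p.2 ∧ Q p.1 m ∧ Q p.2 m).card
      = ∑ p ∈ P, (I.filter fun m => p.1 < p.2 ∧ Q p.1 m ∧ Q p.2 m).card := by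
    simp only [Finset.card_filter]
    exact Finset.sum_comm
  -- bound each pair term
  have hpairR : ∀ p ∈ P, ((I.filter fun m => p.1 < p.2 ∧ Q p.1 m ∧ Q p.2 m).card : ℝ) ≤ ε * L := by
    intro p hp
    simp only [hP, Finset.mem_product, Finset.mem_range] at hp
    by_cases hlt : p.1 < p.2
    · have hcardle : (I.filter fun m => p.1 < p.2 ∧ Q p.1 m ∧ Q p.2 m).card
          ≤ bCnt {t : ℕ | t ∈ A ∧ t + (p.2 - p.1) ∈ A} (a - p.2) L := by
        rw [bCnt_eq]
        apply Finset.card_le_card_of_injOn (fun m => m - p.2)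
        · intro m hm
          simp only [Finset.mem_coe, Finset.mem_filter, hI, Finset.mem_Ico, hQ] at hm
          obtain ⟨⟨ham, hmL⟩, -, ⟨h1m, h1A⟩, ⟨h2m, h2A⟩⟩ := hm
          simp only [Finset.mem_coe, Finset.mem_filter, Finset.mem_Ico, Set.mem_setOf_eq]
          refine ⟨⟨by omega, by omega⟩, h2A, ?_⟩
          have h6 : m - p.2 + (p.2 - p.1) = m - p.1 := by omega
          rw [h6]; exact h1A
        · intro m hm m' hm' h
          dsimp only at h
          simp only [Finset.mem_coe, Finset.mem_filter, hQ] at hm hm'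
          obtain ⟨-, -, -, hm2, -⟩ := hm
          obtain ⟨-, -, -, hm2', -⟩ := hm'
          omega
      calc ((I.filter fun m => p.1 < p.2 ∧ Q p.1 m ∧ Q p.2 m).card : ℝ)
          ≤ (bCnt {t : ℕ | t ∈ A ∧ t + (p.2 - p.1) ∈ A} (a - p.2) L : ℝ) := by
            exact_mod_cast hcardle
        _ ≤ ε * L := le_of_lt (hball (p.2 - p.1) (by omega) (by omega) _)
    · have : (I.filter fun m => p.1 < p.2 ∧ Q p.1 m ∧ Q p.2 m) = ∅ := by
        apply Finset.filter_eq_empty_iff.mpr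
        intro m _
        tauto
      rw [this]
      simp only [Finset.card_empty, Nat.cast_zero]
      positivity
  -- assemble
  have hPcard : (P.card : ℝ) = (k : ℝ) ^ 2 := by
    rw [hP, Finset.card_product, Finset.card_range]
    push_cast
    ring
  have hsumpairR : (∑ p ∈ P, ((I.filter fun m => p.1 < p.2 ∧ Q p.1 m ∧ Q p.2 m).card : ℝ))
      ≤ (k : ℝ) ^ 2 * (ε * L) := by
    calc (∑ p ∈ P, ((I.filter fun m => p.1 < p.2 ∧ Q p.1 m ∧ Q p.2 m).card : ℝ))
        ≤ ∑ _p ∈ P, ε * (L : ℝ) := Finset.sum_le_sum hpairR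
      _ = (P.card : ℝ) * (ε * L) := by rw [Finset.sum_const, nsmul_eq_mul]
      _ = _ := by rw [hPcard]
  have hchain : (k : ℝ) * (bCnt A a n : ℝ) ≤ (L : ℝ) + (k : ℝ) ^ 2 * (ε * L) := by
    have h7 : (k * bCnt A a n : ℕ) ≤ L + ∑ p ∈ P, (I.filter fun m => p.1 < p.2 ∧ Q p.1 m ∧ Q p.2 m).card := by
      rw [← hswap]
      omega
    have h8 : ((k * bCnt A a n : ℕ) : ℝ) ≤ (L : ℝ) + ∑ p ∈ P, ((I.filter fun m => p.1 < p.2 ∧ Q p.1 m ∧ Q p.2 m).card : ℝ) := by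
      push_cast
      exact_mod_cast h7
    push_cast at h8
    linarith
  have hk2e : (k : ℝ) ^ 2 * ε = 1 / 2 := by
    rw [hε]
    field_simp
  have hLle : (L : ℝ) ≤ 2 * n := by
    have : L ≤ 2 * n := by omega
    exact_mod_cast this
  have hfinal1 : 4 * (n : ℝ) ≤ (k : ℝ) * (γ * n) := by
    have hn0' : (0:ℝ) ≤ n := le_of_lt hn0
    nlinarith
  have hfinal2 : (k : ℝ) * (γ * n) < (k : ℝ) * (bCnt A a n : ℝ) := by
    apply mul_lt_mul_of_pos_left hca hkR
  have hfinal3 : (L : ℝ) + (k : ℝ) ^ 2 * (ε * L) = (3 / 2) * L := by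
    rw [← mul_assoc, hk2e]
    ring
  rw [hfinal3] at hchain
  linarith

theorem stmt_10 {X : Type*} [TopologicalSpace X] [TopologicalSpace.NoetherianSpace X]
    (f : X → X) (hf : Continuous f) (x : X) (o : ℕ → X)
    (ho0 : o 0 = x) (ho : ∀ n : ℕ, f (o (n + 1)) = o n)
    (Y : Set X) (hY : IsClosed Y)
    (hδ : 0 < banachDensity {n : ℕ | o n ∈ Y}) :
    ∃ a d : ℕ, 0 < d ∧
      {m : ℕ | ∃ n : ℕ, m = a + n * d} ⊆ {n : ℕ | o n ∈ Y} := by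
  classical
  have hiter : ∀ d m : ℕ, f^[d] (o (m + d)) = o m := by
    intro d
    induction d with
    | zero => intro m; simp
    | succ d ih =>
      intro m
      rw [Function.iterate_succ_apply']
      have h1 : m + (d + 1) = (m + 1) + d := by omega
      rw [h1, ih (m + 1)]
      exact ho m
  set 𝒮 : Set (TopologicalSpace.Closeds X) :=
    {Z | (Z : Set X) ⊆ Y ∧ 0 < banachDensity {n : ℕ | o n ∈ (Z : Set X)}} with h𝒮
  have hYin : (⟨Y, hY⟩ : TopologicalSpace.Closeds X) ∈ 𝒮 := ⟨subset_rfl, hδ⟩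
  obtain ⟨Z, hZmem, hZmin⟩ :=
    (wellFounded_lt (α := TopologicalSpace.Closeds X)).has_min 𝒮 ⟨_, hYin⟩
  obtain ⟨hZY, hZδ⟩ := hZmem
  obtain ⟨d, hd, hDδ⟩ := exists_shift_density hZδ
  set M : Set ℕ := {n : ℕ | o n ∈ (Z : Set X)} with hM
  set Z' : TopologicalSpace.Closeds X :=
    ⟨(Z : Set X) ∩ (f^[d]) ⁻¹' (Z : Set X),
      Z.isClosed.inter (Z.isClosed.preimage (hf.iterate d))⟩ with hZ'
  have hZ'mem : Z' ∈ 𝒮 := by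
    constructor
    · exact Set.Subset.trans Set.inter_subset_left hZY
    · have hsub : (· + d) '' {n : ℕ | n ∈ M ∧ n + d ∈ M} ⊆ {n : ℕ | o n ∈ (Z' : Set X)} := by
        rintro m ⟨t, ⟨ht1, ht2⟩, rfl⟩
        constructor
        · exact ht2
        · show f^[d] (o (t + d)) ∈ (Z : Set X)
          rw [hiter d t]
          exact ht1
      calc (0:ℝ) < banachDensity {n : ℕ | n ∈ M ∧ n + d ∈ M} := hDδ
        _ ≤ banachDensity ((· + d) '' {n : ℕ | n ∈ M ∧ n + d ∈ M}) := banachDensity_shift_le _ d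
        _ ≤ _ := banachDensity_mono hsub
  have hZ'le : Z' ≤ Z := fun z hz => hz.1
  have hZ'eq : Z' = Z := by
    by_contra hne
    exact hZmin Z' hZ'mem (lt_of_le_of_ne hZ'le hne)
  have hpre : (Z : Set X) ⊆ (f^[d]) ⁻¹' (Z : Set X) := by
    intro z hz
    rw [← hZ'eq] at hz
    exact hz.2
  have hdown : ∀ m : ℕ, (m + d) ∈ M → m ∈ M := by
    intro m hm
    have := hpre hm
    rwa [Set.mem_preimage, hiter d m] at this
  have hMinf : M.Infinite := infinite_of_banachDensity_pos hZδ
  -- pigeonhole on residues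
  have hpigeon : ∃ r : ℕ, r < d ∧ {m : ℕ | m ∈ M ∧ m % d = r}.Infinite := by
    by_contra h
    push_neg at h
    have hfin : ∀ r ∈ Finset.range d, {m : ℕ | m ∈ M ∧ m % d = r}.Finite := by
      intro r hr
      rw [Finset.mem_range] at hr
      exact h r hr
    have hsub : M ⊆ ⋃ r ∈ Finset.range d, {m : ℕ | m ∈ M ∧ m % d = r} := by
      intro m hm
      exact Set.mem_biUnion (Finset.mem_range.mpr (Nat.mod_lt m hd)) ⟨hm, rfl⟩
    exact hMinf (Set.Finite.subset (Set.Finite.biUnion (Finset.range d).finite_toSet hfin) hsub)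
  obtain ⟨r, hr, hinf⟩ := hpigeon
  have hdown2 : ∀ i j : ℕ, r + (j + i) * d ∈ M → r + j * d ∈ M := by
    intro i
    induction i with
    | zero => intro j h; simpa using h
    | succ i ih =>
      intro j hmem
      have he : r + (j + (i + 1)) * d = (r + (j + i) * d) + d := by ring
      rw [he] at hmem
      exact ih j (hdown _ hmem)
  refine ⟨r, d, hd, ?_⟩
  rintro m ⟨j, rfl⟩
  have hmm : ∃ b ∈ {m : ℕ | m ∈ M ∧ m % d = r}, r + j * d < b := hinf.exists_gt _
  obtain ⟨b, ⟨hbM, hbr⟩, hbgt⟩ := hmm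
  set q := b / d with hq
  have hbe : b = r + q * d := by
    have h1 : d * q + b % d = b := Nat.div_add_mod b d
    have h2 : q * d = d * q := Nat.mul_comm _ _
    omega
  have hqj : j ≤ q := by
    by_contra hlt
    push_neg at hlt
    have : q * d < j * d := (Nat.mul_lt_mul_right hd).mpr hlt
    omega
  have hin : r + j * d ∈ M := by
    apply hdown2 (q - j) j
    have : j + (q - j) = q := by omega
    rw [this, ← hbe]
    exact hbM
  exact hZY hin
end

section
/- Let X be a Noetherian topological space, let Φ : X → X be a continuous map, let x ∈ X, and let a ≥ 1 and b ≥ 0 be natural numbers. For i ≥ 0 let Cᵢ denote the topological closure of the set Sᵢ = { Φ^(an+b)(x) : n ≥ i }. Then the chain C₀ ⊇ C₁ ⊇ C₂ ⊇ ⋯ stabilizes: there exists m such that Cₘ = Cₘ₊₁ = ⋯; and the stabilized set V₀ = Cₘ satisfies Φ⁻ᵃ(V₀) ⊇ V₀, i.e., Φᵃ maps V₀ into V₀. -/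
theorem stmt_13 {X : Type*} [TopologicalSpace X] [TopologicalSpace.NoetherianSpace X]
    (Φ : X → X) (hΦ : Continuous Φ) (x : X) (a b : ℕ) (ha : 1 ≤ a)
    (C : ℕ → Set X)
    (hC : ∀ i : ℕ, C i = closure {y : X | ∃ n : ℕ, i ≤ n ∧ y = Φ^[a * n + b] x}) :
    (∀ i : ℕ, C (i + 1) ⊆ C i) ∧
      ∃ m : ℕ, (∀ i : ℕ, m ≤ i → C i = C m) ∧ C m ⊆ Φ^[a] ⁻¹' (C m) := by
  have hanti : ∀ i j : ℕ, i ≤ j → C j ⊆ C i := by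
    intro i j hij
    rw [hC i, hC j]
    exact closure_mono fun y ⟨n, hn, hy⟩ => ⟨n, hij.trans hn, hy⟩
  have hmono : ∀ i : ℕ, C (i + 1) ⊆ C i := fun i => hanti i (i + 1) (Nat.le_succ i)
  refine ⟨hmono, ?_⟩
  -- stabilization via Noetherian
  have hclosed : ∀ i, IsClosed (C i) := fun i => by rw [hC i]; exact isClosed_closure
  let f : ℕ →o (TopologicalSpace.Closeds X)ᵒᵈ :=
    ⟨fun i => OrderDual.toDual ⟨C i, hclosed i⟩, fun i j hij => hanti i j hij⟩
  have hwf : WellFounded ((· > ·) : (TopologicalSpace.Closeds X)ᵒᵈ →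
      (TopologicalSpace.Closeds X)ᵒᵈ → Prop) :=
    (inferInstance : WellFoundedGT (TopologicalSpace.Closeds X)ᵒᵈ).wf
  obtain ⟨m, hm⟩ := wellFoundedGT_iff_monotone_chain_condition.1 ⟨hwf⟩ f
  have hstab : ∀ i : ℕ, m ≤ i → C i = C m := by
    intro i hi
    have := hm i hi
    exact congrArg (fun s => (OrderDual.ofDual s : TopologicalSpace.Closeds X).1) this.symm
  refine ⟨m, hstab, ?_⟩
  -- invariance
  have key : C m ⊆ Φ^[a] ⁻¹' (C (m + 1)) := by
    rw [hC m]
    apply closure_minimal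
    · rintro y ⟨n, hn, rfl⟩
      show Φ^[a] (Φ^[a * n + b] x) ∈ C (m + 1)
      rw [hC (m + 1)]
      apply subset_closure
      refine ⟨n + 1, Nat.succ_le_succ hn, ?_⟩
      rw [← Function.iterate_add_apply]
      ring_nf
    · exact (hclosed (m + 1)).preimage (hΦ.iterate a)
  rwa [hstab (m + 1) (Nat.le_succ m)] at key
end
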